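/- arXiv:1003.4716 — 2 statements merged into one kernel-verified Lean document; each statement's English description precedes it below -/
import Mathlib

section
/- Let f and κ : ℝ → EReal be k-convex with speedp(f*) > −∞, let C ⊆ ℝ be a convex set with ψ = inf C and ψ̄ = sup C satisfying 0 < ψ̄ < +∞, and let χ = χ_C. Assume: Φ(nat f) ∩ C ≠ ∅; nat f is right-continuous at ψ̄; Φ(nat f) ∩ Φ(κ) ⊆ [ψ, ∞); and either κ(θ) ≥ θ·(nat f(ψ̄)/ψ̄) for every θ ≥ ψ̄, or varthetapp(f) ≤ ψ̄. Then max(nat(nat f + χ), κ)(θ) = max(nat f, κ)(θ) for every θ ≠ ψ, and if the two sides differ at θ = ψ then max(nat(nat f + χ), κ)(ψ) = +∞. -/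
open Set Filter Topology

noncomputable section

/-- `f : ℝ → EReal` is convex iff its epigraph is a convex set. -/
def EConvex (f : ℝ → EReal) : Prop :=
  Convex ℝ {p : ℝ × ℝ | f p.1 ≤ (p.2 : EReal)}

/-- The Fenchel dual `f*(a) = sup_θ (θ·a − f(θ))`. -/
def Fd (f : ℝ → EReal) : ℝ → EReal :=
  fun a => ⨆ θ : ℝ, ((θ * a : ℝ) : EReal) - f θ

/-- The sweep `f°`: strictly positive values are swept to `+∞`. -/
def sweep (f : ℝ → EReal) : ℝ → EReal :=
  fun a => if f a ≤ 0 then f a else ⊤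

/-- `speedp f = inf {a | f a > 0}`, as an extended real. -/
def speedp (f : ℝ → EReal) : EReal :=
  sInf ((fun a : ℝ => (a : EReal)) '' {a : ℝ | 0 < f a})

/-- k-convex functions. -/
def KConvex (f : ℝ → EReal) : Prop :=
  EConvex f ∧ (∃ θ : ℝ, 0 < θ ∧ f θ < ⊤) ∧ (∀ θ : ℝ, θ < 0 → f θ = ⊤)

/-- The closure `cl f`: the greatest lower semicontinuous function beneath `f`. -/
def ecl (f : ℝ → EReal) : ℝ → EReal :=
  fun x => ⨆ g : {g : ℝ → EReal // LowerSemicontinuous g ∧ ∀ y, g y ≤ f y}, g.1 x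

/-- r-functions: increasing, convex, somewhere in `(−∞,0)`, left continuous,
and `+∞` whenever strictly positive. -/
def RFunction (r : ℝ → EReal) : Prop :=
  Monotone r ∧ EConvex r ∧ (∃ a : ℝ, ⊥ < r a ∧ r a < 0) ∧
    (∀ a : ℝ, ContinuousWithinAt r (Set.Iio a) a) ∧
    (∀ a : ℝ, 0 < r a → r a = ⊤)

/-- The greatest lower semicontinuous convex function beneath `f` and `g`. -/
def cv (f g : ℝ → EReal) : ℝ → EReal :=
  fun x => ⨆ h : {h : ℝ → EReal //
    LowerSemicontinuous h ∧ EConvex h ∧ (∀ y, h y ≤ f y) ∧ (∀ y, h y ≤ g y)}, h.1 x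

/-- `enat f`: the pointwise sup of convex minorants `g` of `f` with `g θ / θ`
antitone on `(0,∞)`. -/
def enat (f : ℝ → EReal) : ℝ → EReal :=
  fun x => ⨆ g : {g : ℝ → EReal // EConvex g ∧ (∀ y, g y ≤ f y) ∧
      AntitoneOn (fun θ : ℝ => g θ * ((θ⁻¹ : ℝ) : EReal)) (Set.Ioi 0)}, g.1 x

/-- `varthetapp f = sup {θ | f θ = enat f θ}`. -/
def varthetapp (f : ℝ → EReal) : EReal :=
  sSup ((fun θ : ℝ => (θ : EReal)) '' {θ : ℝ | f θ = enat f θ})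

/-- `flt f = ((f*)°)*`. -/
def flt (f : ℝ → EReal) : ℝ → EReal := Fd (sweep (Fd f))

/-- The set where `f` is finite. -/
def Phi (f : ℝ → EReal) : Set ℝ := {θ : ℝ | f θ < ⊤}

/-- `A⁺`: points in `A` or above a point of `A`. -/
def plusSet (A : Set ℝ) : Set ℝ := {x : ℝ | ∃ a ∈ A, a ≤ x}

/-- The subdifferential of `f` at `φ`. -/
def esubdiff (f : ℝ → EReal) (φ : ℝ) : Set ℝ :=
  {a : ℝ | ∀ θ : ℝ, f φ + ((a * (θ - φ) : ℝ) : EReal) ≤ f θ}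

open Classical in
/-- The convex indicator of a set: `0` on `C` and `+∞` off it. -/
def echi (C : Set ℝ) : ℝ → EReal := fun θ => if θ ∈ C then 0 else ⊤

-- ===================== infrastructure =====================

section Infra

variable {f g h : ℝ → EReal}

/-- the feasibility predicate underlying `enat` -/
abbrev EnatFeas (f g : ℝ → EReal) : Prop :=
  EConvex g ∧ (∀ y, g y ≤ f y) ∧
    AntitoneOn (fun θ : ℝ => g θ * ((θ⁻¹ : ℝ) : EReal)) (Set.Ioi 0)

lemma le_enat (hg : EnatFeas f g) (x : ℝ) : g x ≤ enat f x :=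
  le_iSup (ι := {g : ℝ → EReal // EConvex g ∧ (∀ y, g y ≤ f y) ∧
      AntitoneOn (fun θ : ℝ => g θ * ((θ⁻¹ : ℝ) : EReal)) (Set.Ioi 0)})
    (fun s => s.1 x) ⟨g, hg⟩

lemma enat_le (f : ℝ → EReal) (x : ℝ) : enat f x ≤ f x :=
  iSup_le fun s => s.2.2.1 x

lemma econvex_enat (f : ℝ → EReal) : EConvex (enat f) := by
  have hset : {p : ℝ × ℝ | enat f p.1 ≤ (p.2 : EReal)} =
      ⋂ s : {g : ℝ → EReal // EConvex g ∧ (∀ y, g y ≤ f y) ∧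
        AntitoneOn (fun θ : ℝ => g θ * ((θ⁻¹ : ℝ) : EReal)) (Set.Ioi 0)},
        {p : ℝ × ℝ | s.1 p.1 ≤ (p.2 : EReal)} := by
    ext p
    simp only [Set.mem_setOf_eq, Set.mem_iInter, enat, iSup_le_iff]
  rw [EConvex, hset]
  exact convex_iInter fun s => s.2.1

lemma EReal.mul_coe_cancel {x : EReal} {c : ℝ} (hc : c ≠ 0) :
    x * (c : EReal) * ((c⁻¹ : ℝ) : EReal) = x := by
  rw [mul_assoc, ← EReal.coe_mul, mul_inv_cancel₀ hc, EReal.coe_one, mul_one]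

lemma EReal.mul_coe_inv_cancel {x : EReal} {c : ℝ} (hc : c ≠ 0) :
    x * ((c⁻¹ : ℝ) : EReal) * (c : EReal) = x := by
  rw [mul_assoc, ← EReal.coe_mul, inv_mul_cancel₀ hc, EReal.coe_one, mul_one]

lemma EReal.le_div_of_mul_le {x y : EReal} {c : ℝ} (hc : 0 < c)
    (h : x * (c : EReal) ≤ y) : x ≤ y * ((c⁻¹ : ℝ) : EReal) := by
  have := mul_le_mul_of_nonneg_right h
    (le_of_lt (by exact_mod_cast inv_pos.2 hc : (0:EReal) < ((c⁻¹:ℝ) : EReal)))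
  rwa [EReal.mul_coe_cancel hc.ne'] at this

lemma EReal.mul_le_of_le_div {x y : EReal} {c : ℝ} (hc : 0 < c)
    (h : x ≤ y * ((c⁻¹ : ℝ) : EReal)) : x * (c : EReal) ≤ y := by
  have := mul_le_mul_of_nonneg_right h
    (le_of_lt (by exact_mod_cast hc : (0:EReal) < (c : EReal)))
  rwa [EReal.mul_coe_inv_cancel hc.ne'] at this

lemma EReal.iSup_mul_coe {ι : Sort*} (a : ι → EReal) {c : ℝ} (hc : 0 < c) :
    (⨆ i, a i) * (c : EReal) = ⨆ i, a i * (c : EReal) := by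
  refine le_antisymm ?_ (iSup_le fun i => mul_le_mul_of_nonneg_right (le_iSup a i)
    (le_of_lt (by exact_mod_cast hc)))
  refine EReal.mul_le_of_le_div hc (iSup_le fun i => ?_)
  exact EReal.le_div_of_mul_le hc (le_iSup (fun i => a i * (c : EReal)) i)

lemma antitoneOn_enat (f : ℝ → EReal) :
    AntitoneOn (fun θ : ℝ => enat f θ * ((θ⁻¹ : ℝ) : EReal)) (Set.Ioi 0) := by
  intro x hx y hy hxy
  simp only
  rw [show enat f x = ⨆ s : {g : ℝ → EReal // EConvex g ∧ (∀ y, g y ≤ f y) ∧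
        AntitoneOn (fun θ : ℝ => g θ * ((θ⁻¹ : ℝ) : EReal)) (Set.Ioi 0)}, s.1 x from rfl,
      show enat f y = ⨆ s : {g : ℝ → EReal // EConvex g ∧ (∀ y, g y ≤ f y) ∧
        AntitoneOn (fun θ : ℝ => g θ * ((θ⁻¹ : ℝ) : EReal)) (Set.Ioi 0)}, s.1 y from rfl,
      EReal.iSup_mul_coe _ (inv_pos.2 (Set.mem_Ioi.1 hx)),
      EReal.iSup_mul_coe _ (inv_pos.2 (Set.mem_Ioi.1 hy))]
  exact iSup_mono fun s => s.2.2.2 hx hy hxy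

lemma enat_feas (f : ℝ → EReal) : EnatFeas f (enat f) :=
  ⟨econvex_enat f, enat_le f, antitoneOn_enat f⟩

lemma econvex_chord (hf : EConvex f) {x y s t a b : ℝ}
    (hx : f x ≤ (s : EReal)) (hy : f y ≤ (t : EReal))
    (ha : 0 ≤ a) (hb : 0 ≤ b) (hab : a + b = 1) :
    f (a * x + b * y) ≤ ((a * s + b * t : ℝ) : EReal) := by
  have := hf (show (x, s) ∈ {p : ℝ × ℝ | f p.1 ≤ (p.2 : EReal)} from hx)
    (show (y, t) ∈ {p : ℝ × ℝ | f p.1 ≤ (p.2 : EReal)} from hy) ha hb hab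
  simpa using this

end Infra

section Infra2

variable {f g h : ℝ → EReal}

lemma EReal.le_coe_of_forall_add {x : EReal} {r : ℝ}
    (h : ∀ ε : ℝ, 0 < ε → x ≤ ((r + ε : ℝ) : EReal)) : x ≤ (r : EReal) := by
  by_contra hc
  push_neg at hc
  obtain ⟨u, hu1, hu2⟩ := EReal.exists_between_coe_real hc
  have := h (u - r) (by have hur : r < u := EReal.coe_lt_coe_iff.1 hu1; linarith)
  rw [show r + (u - r) = u by ring] at this
  exact absurd (lt_of_le_of_lt this hu2) (lt_irrefl _)

lemma exists_linear_minorant (hf : KConvex f) (hΓ : ⊥ < speedp (Fd f)) :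
    ∃ a₀ : ℝ, ∀ θ : ℝ, ((θ * a₀ : ℝ) : EReal) ≤ f θ := by
  obtain ⟨a₀, _, ha₂⟩ := EReal.exists_between_coe_real hΓ
  refine ⟨a₀, fun θ => ?_⟩
  have h1 : ¬ (0 < Fd f a₀) := by
    intro hlt
    have : speedp (Fd f) ≤ (a₀ : EReal) := sInf_le ⟨a₀, hlt, rfl⟩
    exact absurd (lt_of_le_of_lt this ha₂) (lt_irrefl _)
  have h2 : ((θ * a₀ : ℝ) : EReal) - f θ ≤ 0 :=
    le_trans (le_iSup (fun θ' : ℝ => ((θ' * a₀ : ℝ) : EReal) - f θ') θ) (not_lt.1 h1)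
  have h3 := (EReal.sub_le_iff_le_add (c := (0:EReal)) (Or.inr (by simp))
    (Or.inr (by simp))).1 h2
  rwa [zero_add] at h3

/-- convexity of an affine function (as an `EReal`-valued function) -/
lemma econvex_affine (d e : ℝ) : EConvex (fun y : ℝ => ((d * y + e : ℝ) : EReal)) := by
  intro x hx y hy a b ha hb hab
  simp only [Set.mem_setOf_eq, EReal.coe_le_coe_iff] at hx hy
  have h1 : (a • x + b • y).1 = a * x.1 + b * y.1 := rfl
  have h2 : (a • x + b • y).2 = a * x.2 + b * y.2 := rfl
  show ((d * (a • x + b • y).1 + e : ℝ) : EReal) ≤ ((a • x + b • y).2 : ℝ)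
  rw [h1, h2]
  have key : d * (a * x.1 + b * y.1) + e ≤ a * x.2 + b * y.2 := by
    calc d * (a * x.1 + b * y.1) + e = a * (d * x.1 + e) + b * (d * y.1 + e) := by
          linear_combination (-e) * hab
      _ ≤ a * x.2 + b * y.2 :=
          add_le_add (mul_le_mul_of_nonneg_left hx ha) (mul_le_mul_of_nonneg_left hy hb)
  exact_mod_cast key

/-- slope antitonicity of an affine function with nonnegative intercept -/
lemma antitoneOn_affine {d e : ℝ} (he : 0 ≤ e) :
    AntitoneOn (fun θ : ℝ => ((d * θ + e : ℝ) : EReal) * ((θ⁻¹ : ℝ) : EReal))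
      (Set.Ioi 0) := by
  intro x hx y hy hxy
  simp only [← EReal.coe_mul, EReal.coe_le_coe_iff, Set.mem_Ioi] at *
  have hx0 : (0:ℝ) < x := hx
  have hy0 : (0:ℝ) < y := hy
  rw [show (d * y + e) * y⁻¹ = d + e * y⁻¹ by field_simp,
      show (d * x + e) * x⁻¹ = d + e * x⁻¹ by field_simp]
  have h3 : y⁻¹ ≤ x⁻¹ := by gcongr
  nlinarith

lemma econvex_max (hg : EConvex g) (hh : EConvex h) :
    EConvex (fun x => max (g x) (h x)) := by
  have hset : {p : ℝ × ℝ | max (g p.1) (h p.1) ≤ (p.2 : EReal)} =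
      {p : ℝ × ℝ | g p.1 ≤ (p.2 : EReal)} ∩ {p : ℝ × ℝ | h p.1 ≤ (p.2 : EReal)} := by
    ext p; simp [max_le_iff]
  rw [EConvex, hset]
  exact hg.inter hh

lemma EReal.max_mul_coe (a b : EReal) {c : ℝ} (hc : 0 < c) :
    max a b * (c : EReal) = max (a * c) (b * c) := by
  have hc' : (0:EReal) ≤ (c:EReal) := le_of_lt (by exact_mod_cast hc)
  refine le_antisymm ?_ (max_le (mul_le_mul_of_nonneg_right (le_max_left _ _) hc')
    (mul_le_mul_of_nonneg_right (le_max_right _ _) hc'))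
  rcases le_total a b with hab | hab
  · rw [max_eq_right hab]; exact le_max_right _ _
  · rw [max_eq_left hab]; exact le_max_left _ _

lemma antitoneOn_max {F G : ℝ → EReal}
    (hF : AntitoneOn (fun θ : ℝ => F θ * ((θ⁻¹ : ℝ) : EReal)) (Set.Ioi 0))
    (hG : AntitoneOn (fun θ : ℝ => G θ * ((θ⁻¹ : ℝ) : EReal)) (Set.Ioi 0)) :
    AntitoneOn (fun θ : ℝ => max (F θ) (G θ) * ((θ⁻¹ : ℝ) : EReal)) (Set.Ioi 0) := by
  intro x hx y hy hxy
  simp only [EReal.max_mul_coe _ _ (inv_pos.2 (Set.mem_Ioi.1 hx)),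
    EReal.max_mul_coe _ _ (inv_pos.2 (Set.mem_Ioi.1 hy))]
  exact max_le_max (hF hx hy hxy) (hG hx hy hxy)

end Infra2

section Infra3

variable {f : ℝ → EReal} {a₀ r : ℝ}

lemma econvex_bump (r a₀ : ℝ) :
    EConvex (fun z : ℝ => if z < r then (⊤ : EReal) else ((z * a₀ : ℝ) : EReal)) := by
  intro x hx y hy a b ha hb hab
  simp only [Set.mem_setOf_eq] at hx hy
  have hx1 : ¬ x.1 < r := by
    intro h; rw [if_pos h] at hx; exact EReal.coe_ne_top _ (top_le_iff.1 hx)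
  have hy1 : ¬ y.1 < r := by
    intro h; rw [if_pos h] at hy; exact EReal.coe_ne_top _ (top_le_iff.1 hy)
  rw [if_neg hx1] at hx; rw [if_neg hy1] at hy
  have hx2 : x.1 * a₀ ≤ x.2 := EReal.coe_le_coe_iff.1 hx
  have hy2 : y.1 * a₀ ≤ y.2 := EReal.coe_le_coe_iff.1 hy
  show (if (a • x + b • y).1 < r then (⊤:EReal) else (((a • x + b • y).1 * a₀ : ℝ) : EReal))
      ≤ ((a • x + b • y).2 : ℝ)
  have h1 : (a • x + b • y).1 = a * x.1 + b * y.1 := rfl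
  have h2 : (a • x + b • y).2 = a * x.2 + b * y.2 := rfl
  push_neg at hx1 hy1
  have hr : a * r + b * r = r := by linear_combination r * hab
  have hge : ¬ (a • x + b • y).1 < r := by
    rw [h1]; push_neg
    have := mul_le_mul_of_nonneg_left hx1 ha
    have := mul_le_mul_of_nonneg_left hy1 hb
    linarith
  rw [if_neg hge, h1, h2]
  have key : (a * x.1 + b * y.1) * a₀ ≤ a * x.2 + b * y.2 := by
    calc (a * x.1 + b * y.1) * a₀ = a * (x.1 * a₀) + b * (y.1 * a₀) := by ring
      _ ≤ a * x.2 + b * y.2 :=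
        add_le_add (mul_le_mul_of_nonneg_left hx2 ha) (mul_le_mul_of_nonneg_left hy2 hb)
  exact_mod_cast key

lemma antitoneOn_bump (r a₀ : ℝ) :
    AntitoneOn (fun θ : ℝ => (if θ < r then (⊤ : EReal) else ((θ * a₀ : ℝ) : EReal))
      * ((θ⁻¹ : ℝ) : EReal)) (Set.Ioi 0) := by
  intro x hx y hy hxy
  have hx0 : (0:ℝ) < x := hx
  have hy0 : (0:ℝ) < y := hy
  simp only
  by_cases hyr : y < r
  · rw [if_pos hyr, if_pos (lt_of_le_of_lt hxy hyr),
      EReal.top_mul_of_pos (by exact_mod_cast inv_pos.2 hx0 : (0:EReal) < ((x⁻¹:ℝ):EReal)),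
      EReal.top_mul_of_pos (by exact_mod_cast inv_pos.2 hy0 : (0:EReal) < ((y⁻¹:ℝ):EReal))]
  · rw [if_neg hyr, ← EReal.coe_mul,
      show y * a₀ * y⁻¹ = a₀ by field_simp [hy0.ne']]
    by_cases hxr : x < r
    · rw [if_pos hxr,
        EReal.top_mul_of_pos (by exact_mod_cast inv_pos.2 hx0 : (0:EReal) < ((x⁻¹:ℝ):EReal))]
      exact le_top
    · rw [if_neg hxr, ← EReal.coe_mul,
        show x * a₀ * x⁻¹ = a₀ by field_simp [hx0.ne']]

lemma enat_top_of_top (hline : ∀ θ : ℝ, ((θ * a₀ : ℝ) : EReal) ≤ f θ)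
    (htop : ∀ s : ℝ, s < r → f s = ⊤) {x : ℝ} (hx : x < r) : enat f x = ⊤ := by
  have hfeas : EnatFeas f (fun z : ℝ => if z < r then (⊤ : EReal) else ((z * a₀ : ℝ) : EReal)) := by
    refine ⟨econvex_bump r a₀, fun y => ?_, antitoneOn_bump r a₀⟩
    show (if y < r then (⊤ : EReal) else ((y * a₀ : ℝ) : EReal)) ≤ f y
    by_cases hyr : y < r
    · rw [if_pos hyr, htop y hyr]
    · rw [if_neg hyr]; exact hline y
  have h2 : (if x < r then (⊤ : EReal) else ((x * a₀ : ℝ) : EReal)) ≤ enat f x :=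
    le_enat hfeas x
  rw [if_pos hx] at h2
  exact top_le_iff.1 h2

lemma enat_ge_line (hline : ∀ θ : ℝ, ((θ * a₀ : ℝ) : EReal) ≤ f θ) :
    ∀ x : ℝ, ((x * a₀ : ℝ) : EReal) ≤ enat f x := by
  intro x
  have hfeas : EnatFeas f (fun z : ℝ => ((a₀ * z + 0 : ℝ) : EReal)) := by
    refine ⟨econvex_affine a₀ 0, fun y => ?_, antitoneOn_affine le_rfl⟩
    show ((a₀ * y + 0 : ℝ) : EReal) ≤ f y
    rw [show a₀ * y + 0 = y * a₀ by ring]; exact hline y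
  have h2 : ((a₀ * x + 0 : ℝ) : EReal) ≤ enat f x := le_enat hfeas x
  rwa [show a₀ * x + 0 = x * a₀ by ring] at h2

lemma enat_bot_lt (hline : ∀ θ : ℝ, ((θ * a₀ : ℝ) : EReal) ≤ f θ) (x : ℝ) :
    ⊥ < enat f x :=
  lt_of_lt_of_le (by exact_mod_cast EReal.bot_lt_coe (x * a₀)) (enat_ge_line hline x)

end Infra3

section Chi

variable {f : ℝ → EReal} {C : Set ℝ}

lemma echi_nonneg (C : Set ℝ) (x : ℝ) : (0:EReal) ≤ echi C x := by
  unfold echi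
  split
  · exact le_rfl
  · exact le_top

lemma echi_eq_zero {x : ℝ} (hx : x ∈ C) : echi C x = 0 := by simp [echi, hx]

lemma echi_eq_top {x : ℝ} (hx : x ∉ C) : echi C x = ⊤ := by simp [echi, hx]

lemma enat_le_enat_add_echi (f : ℝ → EReal) (C : Set ℝ) (x : ℝ) :
    enat f x ≤ enat (fun y => enat f y + echi C y) x :=
  le_enat ⟨econvex_enat f, fun y => le_add_of_nonneg_right (echi_nonneg C y),
    antitoneOn_enat f⟩ x

lemma enat_add_echi_le_on (f : ℝ → EReal) {C : Set ℝ} {x : ℝ} (hx : x ∈ C) :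
    enat (fun y => enat f y + echi C y) x ≤ enat f x := by
  have h2 := enat_le (fun y => enat f y + echi C y) x
  rwa [echi_eq_zero hx, add_zero] at h2

lemma enat_add_echi_eq_on (f : ℝ → EReal) {C : Set ℝ} {x : ℝ} (hx : x ∈ C) :
    enat (fun y => enat f y + echi C y) x = enat f x :=
  le_antisymm (enat_add_echi_le_on f hx) (enat_le_enat_add_echi f C x)

lemma enat_add_echi_top (hbot : ∀ x : ℝ, enat f x ≠ ⊥)
    {q : ℝ} (hq : IsGLB C q) (hqC : q ∉ C) :
    enat (fun y => enat f y + echi C y) q = ⊤ := by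
  have hnotC : ∀ z : ℝ, z ≤ q → z ∉ C := by
    intro z hz hzC
    have := hq.1 hzC
    have hzq : z = q := le_antisymm hz this
    exact hqC (hzq ▸ hzC)
  have hfeas : EnatFeas (fun y => enat f y + echi C y)
      (fun z : ℝ => if z ≤ q then ⊤ else ⊥) := by
    refine ⟨?_, ?_, ?_⟩
    · intro x hx y hy a b ha hb hab
      simp only [Set.mem_setOf_eq] at hx hy
      have hx1 : ¬ x.1 ≤ q := by
        intro h1; rw [if_pos h1] at hx; exact EReal.coe_ne_top _ (top_le_iff.1 hx)
      have hy1 : ¬ y.1 ≤ q := by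
        intro h1; rw [if_pos h1] at hy; exact EReal.coe_ne_top _ (top_le_iff.1 hy)
      push_neg at hx1 hy1
      show (if (a • x + b • y).1 ≤ q then (⊤:EReal) else ⊥) ≤ ((a • x + b • y).2 : ℝ)
      have h1 : (a • x + b • y).1 = a * x.1 + b * y.1 := rfl
      have hgt : ¬ (a • x + b • y).1 ≤ q := by
        rw [h1]; push_neg
        rcases eq_or_lt_of_le ha with ha0 | ha0
        · have hb1 : b = 1 := by linarith
          rw [← ha0, hb1]; simpa using hy1
        · have h2 : a * q < a * x.1 := mul_lt_mul_of_pos_left hx1 ha0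
          have h3 : b * q ≤ b * y.1 := mul_le_mul_of_nonneg_left (le_of_lt hy1) hb
          have hr : a * q + b * q = q := by linear_combination q * hab
          linarith
      rw [if_neg hgt]
      exact bot_le
    · intro z
      show (if z ≤ q then (⊤:EReal) else ⊥) ≤ enat f z + echi C z
      by_cases hz : z ≤ q
      · rw [if_pos hz, echi_eq_top (hnotC z hz),
          EReal.add_top_of_ne_bot (hbot z)]
      · rw [if_neg hz]; exact bot_le
    · intro x hx y hy hxy
      have hx0 : (0:ℝ) < x := hx
      have hy0 : (0:ℝ) < y := hy
      simp only
      by_cases hyq : y ≤ q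
      · rw [if_pos hyq, if_pos (le_trans hxy hyq),
          EReal.top_mul_of_pos (by exact_mod_cast inv_pos.2 hx0 : (0:EReal) < ((x⁻¹:ℝ):EReal)),
          EReal.top_mul_of_pos (by exact_mod_cast inv_pos.2 hy0 : (0:EReal) < ((y⁻¹:ℝ):EReal))]
      · rw [if_neg hyq,
          EReal.bot_mul_of_pos (by exact_mod_cast inv_pos.2 hy0 : (0:EReal) < ((y⁻¹:ℝ):EReal))]
        exact bot_le
  have h2 : (if q ≤ q then (⊤:EReal) else ⊥) ≤ enat (fun y => enat f y + echi C y) q :=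
    le_enat hfeas q
  rw [if_pos le_rfl] at h2
  exact top_le_iff.1 h2

end Chi

section LemS

lemma lemS {f : ℝ → EReal} {C : Set ℝ} (hC : Convex ℝ C)
    {p : ℝ} (hp : IsLUB C p) (hp0 : 0 < p)
    {a : ℝ} (haC : a ∈ C) (haf : enat f a < ⊤)
    (hbot : ∀ x : ℝ, enat f x ≠ ⊥)
    {θ : ℝ} (hθ : p ≤ θ) :
    enat (fun x => enat f x + echi C x) θ ≤
      (θ : EReal) * (enat f p * ((p⁻¹ : ℝ) : EReal)) := by
  have hθ0 : 0 < θ := lt_of_lt_of_le hp0 hθ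
  refine iSup_le fun s => ?_
  obtain ⟨w, hwconv, hwle, hwanti⟩ := s
  simp only
  -- key step: bound via any point s₀ of C ∩ (0, θ]
  have key : ∀ s₀ : ℝ, s₀ ∈ C → 0 < s₀ → s₀ ≤ θ →
      w θ ≤ (θ : EReal) * (enat f s₀ * ((s₀⁻¹ : ℝ) : EReal)) := by
    intro s₀ hs₀C hs₀0 hs₀θ
    have h1 : w θ * ((θ⁻¹ : ℝ) : EReal) ≤ w s₀ * ((s₀⁻¹ : ℝ) : EReal) :=
      hwanti (Set.mem_Ioi.2 hs₀0) (Set.mem_Ioi.2 hθ0) hs₀θ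
    have h2 : w s₀ ≤ enat f s₀ := by
      have h2' : w s₀ ≤ enat f s₀ + echi C s₀ := hwle s₀
      rwa [echi_eq_zero hs₀C, add_zero] at h2'
    have h3 : w θ * ((θ⁻¹ : ℝ) : EReal) ≤ enat f s₀ * ((s₀⁻¹ : ℝ) : EReal) :=
      le_trans h1 (mul_le_mul_of_nonneg_right h2
        (by exact_mod_cast le_of_lt (inv_pos.2 hs₀0) : (0:EReal) ≤ ((s₀⁻¹:ℝ):EReal)))
    calc w θ = w θ * ((θ⁻¹ : ℝ) : EReal) * (θ : EReal) :=
          (EReal.mul_coe_inv_cancel hθ0.ne').symm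
      _ ≤ enat f s₀ * ((s₀⁻¹ : ℝ) : EReal) * (θ : EReal) :=
          mul_le_mul_of_nonneg_right h3 (by exact_mod_cast le_of_lt hθ0)
      _ = (θ : EReal) * (enat f s₀ * ((s₀⁻¹ : ℝ) : EReal)) := mul_comm _ _
  by_cases hgp : enat f p = ⊤
  · rw [hgp, EReal.top_mul_of_pos (by exact_mod_cast inv_pos.2 hp0 : (0:EReal) < ((p⁻¹:ℝ):EReal)),
      EReal.mul_top_of_pos (by exact_mod_cast hθ0 : (0:EReal) < (θ:EReal))]
    exact le_top
  by_cases hpC : p ∈ C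
  · exact key p hpC hp0 hθ
  -- p ∉ C : approximate from the left inside C
  have hap : a ≤ p := hp.1 haC
  have hap' : a < p := lt_of_le_of_ne hap (fun h => hpC (h ▸ haC))
  set G := (enat f p).toReal with hG
  have hgpe : enat f p = (G : EReal) := (EReal.coe_toReal hgp (hbot p)).symm
  set A := (enat f a).toReal with hA
  have hgae : enat f a ≤ (A : EReal) := EReal.le_coe_toReal (ne_of_lt haf)
  rw [hgpe, ← EReal.coe_mul, ← EReal.coe_mul]
  refine EReal.le_coe_of_forall_add fun ε hε => ?_
  set Φ : ℝ → ℝ := fun t => θ * (((1-t)*A + t*G) / ((1-t)*a + t*p)) with hΦ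
  have hcont : ContinuousAt Φ 1 := by
    apply ContinuousAt.mul continuousAt_const
    apply ContinuousAt.div (by fun_prop) (by fun_prop)
    simp [hp0.ne']
  have hΦ1 : Φ 1 = θ * (G * p⁻¹) := by
    rw [hΦ]; norm_num [div_eq_mul_inv]
  have hTend : Filter.Tendsto Φ (𝓝[Set.Iio (1:ℝ)] 1) (𝓝 (θ * (G * p⁻¹))) := by
    rw [← hΦ1]
    exact hcont.continuousWithinAt.tendsto
  have ev1 : ∀ᶠ t in 𝓝[Set.Iio (1:ℝ)] 1, Φ t < θ * (G * p⁻¹) + ε :=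
    hTend.eventually (Iio_mem_nhds (by linarith))
  have ev2 : ∀ᶠ t in 𝓝[Set.Iio (1:ℝ)] 1, 0 < (1-t)*a + t*p := by
    have hsd : Filter.Tendsto (fun t : ℝ => (1-t)*a + t*p) (𝓝[Set.Iio (1:ℝ)] 1) (𝓝 p) := by
      have hca : ContinuousAt (fun t : ℝ => (1-t)*a + t*p) 1 := by fun_prop
      have h5 : Filter.Tendsto (fun t : ℝ => (1-t)*a + t*p) (𝓝[Set.Iio (1:ℝ)] 1)
          (𝓝 ((1-(1:ℝ))*a + 1*p)) := hca.continuousWithinAt.tendsto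
      simpa using h5
    exact hsd.eventually (Ioi_mem_nhds hp0)
  have ev3 : ∀ᶠ t in 𝓝[Set.Iio (1:ℝ)] 1, (0:ℝ) < t :=
    eventually_nhdsWithin_of_eventually_nhds (eventually_gt_nhds zero_lt_one)
  have ev4 : ∀ᶠ t in 𝓝[Set.Iio (1:ℝ)] 1, t ∈ Set.Iio (1:ℝ) :=
    eventually_mem_nhdsWithin
  obtain ⟨t, ⟨⟨h1, h2⟩, h3⟩, h4⟩ := (((ev1.and ev2).and ev3).and ev4).exists
  have ht1 : t < 1 := h4
  set s₀ := (1-t)*a + t*p with hs₀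
  have hs₀p : s₀ < p := by nlinarith
  have has₀ : a ≤ s₀ := by nlinarith
  have hs₀C : s₀ ∈ C := by
    have hex : ∃ b ∈ C, s₀ < b := by
      by_contra hno
      push_neg at hno
      exact absurd (hp.2 hno) (not_le.2 hs₀p)
    obtain ⟨b, hbC, hs₀b⟩ := hex
    exact (hC.ordConnected).out haC hbC ⟨has₀, le_of_lt hs₀b⟩
  have hchord : enat f s₀ ≤ (((1-t)*A + t*G : ℝ) : EReal) :=
    econvex_chord (econvex_enat f) hgae (le_of_eq hgpe) (by linarith) (by linarith)
      (by ring)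
  have hkey := key s₀ hs₀C h2 (le_trans (le_of_lt hs₀p) hθ)
  calc w θ ≤ (θ : EReal) * (enat f s₀ * ((s₀⁻¹ : ℝ) : EReal)) := hkey
    _ ≤ (θ : EReal) * ((((1-t)*A + t*G : ℝ) : EReal) * ((s₀⁻¹ : ℝ) : EReal)) := by
        apply mul_le_mul_of_nonneg_left
        · exact mul_le_mul_of_nonneg_right hchord
            (by exact_mod_cast le_of_lt (inv_pos.2 h2) : (0:EReal) ≤ ((s₀⁻¹:ℝ):EReal))
        · exact_mod_cast le_of_lt hθ0
    _ = ((Φ t : ℝ) : EReal) := by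
        rw [← EReal.coe_mul, ← EReal.coe_mul]
        congr 1
    _ ≤ ((θ * (G * p⁻¹) + ε : ℝ) : EReal) := by exact_mod_cast le_of_lt h1

end LemS

section Master

lemma EReal.real_of_lt_coe {x : EReal} {V : ℝ} (h : x < (V : EReal)) (hb : x ≠ ⊥) :
    x = ((x.toReal : ℝ) : EReal) ∧ x.toReal < V := by
  have ht : x ≠ ⊤ := ne_top_of_lt h
  refine ⟨(EReal.coe_toReal ht hb).symm, ?_⟩
  rw [← EReal.coe_lt_coe_iff, EReal.coe_toReal ht hb]
  exact h

lemma master {f : ℝ → EReal} (hconv : EConvex f) {a₀ : ℝ}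
    (hline : ∀ θ : ℝ, ((θ * a₀ : ℝ) : EReal) ≤ f θ)
    (hneg : ∀ θ : ℝ, θ < 0 → f θ = ⊤)
    {x₀ c : ℝ} (hx₀ : 0 < x₀)
    (hβ : ∀ y : ℝ, 0 < y → y ≤ x₀ → ((c * y : ℝ) : EReal) ≤ f y)
    {s₁ : ℝ} (hs₁ : s₁ < x₀) (hs₁f : f s₁ < ⊤) :
    ((c * x₀ : ℝ) : EReal) ≤ enat f x₀ := by
  have hfbot : ∀ y : ℝ, f y ≠ ⊥ := fun y =>
    ne_of_gt (lt_of_lt_of_le (EReal.bot_lt_coe _) (hline y))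
  have hβ0 : ((c * x₀ : ℝ) : EReal) ≤ f x₀ := hβ x₀ hx₀ le_rfl
  set Sl : Set ℝ :=
    {s : ℝ | ∃ u : ℝ, x₀ < u ∧ f u < ((c * x₀ + s * (u - x₀) : ℝ) : EReal)} with hSl
  by_cases hcSl : c ∈ Sl
  swap
  · -- the line y ↦ c y is a feasible minorant
    have hfeas : EnatFeas f (fun y : ℝ => ((c * y + 0 : ℝ) : EReal)) := by
      refine ⟨econvex_affine c 0, fun y => ?_, antitoneOn_affine le_rfl⟩
      show ((c * y + 0 : ℝ) : EReal) ≤ f y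
      rw [add_zero]
      rcases lt_trichotomy y 0 with hy | hy | hy
      · rw [hneg y hy]; exact le_top
      · subst hy
        rw [mul_zero]
        have := hline 0
        rwa [zero_mul] at this
      · rcases le_or_gt y x₀ with h1 | h1
        · exact hβ y hy h1
        · by_contra hcon
          push_neg at hcon
          apply hcSl
          exact ⟨y, h1, by rw [show c * x₀ + c * (y - x₀) = c * y by ring]; exact hcon⟩
    have h2 : ((c * x₀ + 0 : ℝ) : EReal) ≤ enat f x₀ := le_enat hfeas x₀
    rwa [add_zero] at h2
  · -- c ∈ Sl : use the rotated supporting line with slope δ = sInf Sl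
    obtain ⟨F₁, hF₁⟩ : ∃ v : ℝ, v = (f s₁).toReal := ⟨_, rfl⟩
    have hfs₁ : f s₁ ≤ (F₁ : EReal) := hF₁ ▸ EReal.le_coe_toReal (ne_of_lt hs₁f)
    have hx₀s₁ : 0 < x₀ - s₁ := by linarith
    have hbdd : ∀ s ∈ Sl, (c * x₀ - F₁) / (x₀ - s₁) ≤ s := by
      rintro s ⟨u, hu, hufu⟩
      obtain ⟨hru, hrult⟩ := EReal.real_of_lt_coe hufu (hfbot u)
      obtain ⟨ru, hrudef⟩ : ∃ v : ℝ, v = (f u).toReal := ⟨_, rfl⟩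
      rw [← hrudef] at hru hrult
      have hux₀ : 0 < u - x₀ := by linarith
      have hus₁ : 0 < u - s₁ := by linarith
      obtain ⟨l, hl⟩ : ∃ v : ℝ, v = (u - x₀) / (u - s₁) := ⟨_, rfl⟩
      obtain ⟨m, hm⟩ : ∃ v : ℝ, v = (x₀ - s₁) / (u - s₁) := ⟨_, rfl⟩
      have hl0 : 0 < l := hl ▸ div_pos hux₀ hus₁
      have hm0 : 0 < m := hm ▸ div_pos hx₀s₁ hus₁
      have hlm : l + m = 1 := by rw [hl, hm]; field_simp; ring
      have hpt : l * s₁ + m * u = x₀ := by rw [hl, hm]; field_simp; ring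
      have hch := econvex_chord hconv hfs₁ hru.le (le_of_lt hl0) (le_of_lt hm0) hlm
      rw [hpt] at hch
      have hch' : c * x₀ ≤ l * F₁ + m * ru := by exact_mod_cast le_trans hβ0 hch
      have hl' : l * (u - s₁) = u - x₀ := by rw [hl]; field_simp
      have hm' : m * (u - s₁) = x₀ - s₁ := by rw [hm]; field_simp
      have step1 : c * x₀ * (u - s₁) ≤ (l * F₁ + m * ru) * (u - s₁) :=
        mul_le_mul_of_nonneg_right hch' hus₁.le
      have step2 : (l * F₁ + m * ru) * (u - s₁) = F₁ * (u - x₀) + ru * (x₀ - s₁) := by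
        calc (l * F₁ + m * ru) * (u - s₁) = F₁ * (l * (u - s₁)) + ru * (m * (u - s₁)) := by
              ring
          _ = F₁ * (u - x₀) + ru * (x₀ - s₁) := by rw [hl', hm']
      have step3 : ru * (x₀ - s₁) ≤ (c * x₀ + s * (u - x₀)) * (x₀ - s₁) :=
        mul_le_mul_of_nonneg_right hrult.le (le_of_lt hx₀s₁)
      have h7 : (u - x₀) * (c * x₀ - F₁) ≤ (u - x₀) * (s * (x₀ - s₁)) := by nlinarith
      have h8 : c * x₀ - F₁ ≤ s * (x₀ - s₁) := le_of_mul_le_mul_left h7 hux₀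
      exact (div_le_iff₀ hx₀s₁).2 (by linarith)
    have hSlne : Sl.Nonempty := ⟨c, hcSl⟩
    have hSlbdd : BddBelow Sl := ⟨(c * x₀ - F₁) / (x₀ - s₁), hbdd⟩
    obtain ⟨δ, hδ⟩ : ∃ v : ℝ, v = sInf Sl := ⟨_, rfl⟩
    have hδc : δ ≤ c := hδ ▸ csInf_le hSlbdd hcSl
    -- validity to the right of x₀
    have hrt : ∀ u : ℝ, x₀ < u → ((c * x₀ + δ * (u - x₀) : ℝ) : EReal) ≤ f u := by
      intro u hu
      by_contra hcon
      push_neg at hcon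
      obtain ⟨hru, hrult⟩ := EReal.real_of_lt_coe hcon (hfbot u)
      obtain ⟨ru, hrudef⟩ : ∃ v : ℝ, v = (f u).toReal := ⟨_, rfl⟩
      rw [← hrudef] at hru hrult
      have hux₀ : 0 < u - x₀ := by linarith
      have hne : u - x₀ ≠ 0 := ne_of_gt hux₀
      obtain ⟨gap, hgap⟩ : ∃ v : ℝ, v = c * x₀ + δ * (u - x₀) - ru := ⟨_, rfl⟩
      have hgap0 : 0 < gap := by rw [hgap]; linarith
      obtain ⟨s, hs⟩ : ∃ v : ℝ, v = δ - gap / (2 * (u - x₀)) := ⟨_, rfl⟩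
      have hkey : c * x₀ + s * (u - x₀) = ru + gap / 2 := by
        rw [hs, hgap]; field_simp; ring
      have hsSl : s ∈ Sl := by
        refine ⟨u, hu, ?_⟩
        rw [hru]
        apply EReal.coe_lt_coe_iff.2
        rw [hkey]
        linarith
      have hles : δ ≤ s := hδ ▸ csInf_le hSlbdd hsSl
      have hspos : 0 < gap / (2 * (u - x₀)) := div_pos hgap0 (by linarith)
      rw [hs] at hles
      linarith
    -- validity to the left of x₀
    have hlf : ∀ y : ℝ, y < x₀ → ((c * x₀ + δ * (y - x₀) : ℝ) : EReal) ≤ f y := by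
      intro y hy
      by_contra hcon
      push_neg at hcon
      obtain ⟨hry, hrylt⟩ := EReal.real_of_lt_coe hcon (hfbot y)
      obtain ⟨ry, hrydef⟩ : ∃ v : ℝ, v = (f y).toReal := ⟨_, rfl⟩
      rw [← hrydef] at hry hrylt
      have hx₀y : 0 < x₀ - y := by linarith
      obtain ⟨ρ, hρ⟩ : ∃ v : ℝ, v = c * x₀ + δ * (y - x₀) - ry := ⟨_, rfl⟩
      have hρ0 : 0 < ρ := by rw [hρ]; linarith
      obtain ⟨s', hs'⟩ : ∃ v : ℝ, v = δ + ρ / (2 * (x₀ - y)) := ⟨_, rfl⟩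
      have hδs' : δ < s' := by
        have h9 : 0 < ρ / (2 * (x₀ - y)) := div_pos hρ0 (by linarith)
        rw [hs']; linarith
      obtain ⟨s, hsSl, hss'⟩ := exists_lt_of_csInf_lt hSlne (hδ ▸ hδs')
      obtain ⟨u, hu, hufu⟩ := hsSl
      have hux₀ : 0 < u - x₀ := by linarith
      have huy : 0 < u - y := by linarith
      have hfu : f u ≤ ((c * x₀ + s' * (u - x₀) : ℝ) : EReal) := by
        refine le_trans (le_of_lt hufu) ?_
        apply EReal.coe_le_coe_iff.2
        nlinarith
      obtain ⟨l, hl⟩ : ∃ v : ℝ, v = (u - x₀) / (u - y) := ⟨_, rfl⟩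
      obtain ⟨m, hm⟩ : ∃ v : ℝ, v = (x₀ - y) / (u - y) := ⟨_, rfl⟩
      have hl0 : 0 < l := hl ▸ div_pos hux₀ huy
      have hm0 : 0 < m := hm ▸ div_pos hx₀y huy
      have hlm : l + m = 1 := by rw [hl, hm]; field_simp; ring
      have hpt : l * y + m * u = x₀ := by rw [hl, hm]; field_simp; ring
      have hch := econvex_chord hconv hry.le hfu (le_of_lt hl0) (le_of_lt hm0) hlm
      rw [hpt] at hch
      have hch' : c * x₀ ≤ l * ry + m * (c * x₀ + s' * (u - x₀)) := by
        exact_mod_cast le_trans hβ0 hch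
      have hmu : m * (u - x₀) = l * (x₀ - y) := by rw [hl, hm]; field_simp
      have hs'e : s' * (x₀ - y) = δ * (x₀ - y) + ρ / 2 := by
        rw [hs']; field_simp
      have hrye : ry = c * x₀ + δ * (y - x₀) - ρ := by rw [hρ]; ring
      have e2 : l * ry + m * (c * x₀ + s' * (u - x₀)) = c * x₀ - l * (ρ / 2) := by
        have e1 : m * (s' * (u - x₀)) = l * (s' * (x₀ - y)) := by
          calc m * (s' * (u - x₀)) = s' * (m * (u - x₀)) := by ring
            _ = s' * (l * (x₀ - y)) := by rw [hmu]
            _ = l * (s' * (x₀ - y)) := by ring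
        have e3 : l * (s' * (x₀ - y)) = l * (δ * (x₀ - y)) + l * (ρ / 2) := by
          rw [hs'e]; ring
        calc l * ry + m * (c * x₀ + s' * (u - x₀))
            = l * ry + m * (c * x₀) + m * (s' * (u - x₀)) := by ring
          _ = l * ry + m * (c * x₀) + (l * (δ * (x₀ - y)) + l * (ρ / 2)) := by
              rw [e1, e3]
          _ = c * x₀ - l * (ρ / 2) := by
              rw [hrye]
              linear_combination (c * x₀) * hlm
      rw [e2] at hch'
      nlinarith [mul_pos hl0 hρ0]
    -- assemble the feasible affine minorant
    have hfeas : EnatFeas f (fun y : ℝ => ((δ * y + (c - δ) * x₀ : ℝ) : EReal)) := by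
      refine ⟨econvex_affine δ ((c - δ) * x₀), fun y => ?_,
        antitoneOn_affine (by nlinarith : (0:ℝ) ≤ (c - δ) * x₀)⟩
      show ((δ * y + (c - δ) * x₀ : ℝ) : EReal) ≤ f y
      rcases lt_trichotomy y x₀ with h1 | h1 | h1
      · have := hlf y h1
        rwa [show c * x₀ + δ * (y - x₀) = δ * y + (c - δ) * x₀ by ring] at this
      · subst h1
        rw [show δ * y + (c - δ) * y = c * y by ring]
        exact hβ y hx₀ le_rfl
      · have := hrt y h1
        rwa [show c * x₀ + δ * (y - x₀) = δ * y + (c - δ) * x₀ by ring] at this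
    have h2 : ((δ * x₀ + (c - δ) * x₀ : ℝ) : EReal) ≤ enat f x₀ := le_enat hfeas x₀
    rwa [show δ * x₀ + (c - δ) * x₀ = c * x₀ by ring] at h2

end Master

section ChordLimit

lemma chord_limit {F : ℝ → EReal} (hF : EConvex F) {s₁ r₁ x₀ c : ℝ}
    (hs₁ : s₁ < x₀) (hFs₁ : F s₁ ≤ (r₁ : EReal))
    (happ : ∀ η : ℝ, 0 < η → ∃ u : ℝ, x₀ < u ∧ u < x₀ + η ∧ F u ≤ ((c * u : ℝ) : EReal)) :
    F x₀ ≤ ((c * x₀ : ℝ) : EReal) := by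
  refine EReal.le_coe_of_forall_add fun ε hε => ?_
  set Φ : ℝ → ℝ := fun u => ((u - x₀) * r₁ + (x₀ - s₁) * (c * u)) / (u - s₁) with hΦ
  have hcont : ContinuousAt Φ x₀ := by
    apply ContinuousAt.div (by fun_prop) (by fun_prop)
    simp [sub_ne_zero.2 (ne_of_gt hs₁)]
  have hd : x₀ - s₁ ≠ 0 := sub_ne_zero.2 (ne_of_gt hs₁)
  have hΦx₀ : Φ x₀ = c * x₀ := by
    rw [hΦ]
    field_simp
    ring
  have hev : ∀ᶠ u in 𝓝 x₀, Φ u < c * x₀ + ε := by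
    have h5 := hcont.tendsto
    rw [hΦx₀] at h5
    exact h5.eventually (Iio_mem_nhds (by linarith))
  obtain ⟨η, hη, hball⟩ := Metric.eventually_nhds_iff.1 hev
  obtain ⟨u, hu1, hu2, hu3⟩ := happ η hη
  have hΦu : Φ u < c * x₀ + ε := hball (by rw [Real.dist_eq, abs_lt]; constructor <;> linarith)
  have hus₁ : 0 < u - s₁ := by linarith
  have hux₀ : 0 < u - x₀ := by linarith
  obtain ⟨l, hl⟩ : ∃ v : ℝ, v = (u - x₀) / (u - s₁) := ⟨_, rfl⟩
  obtain ⟨m, hm⟩ : ∃ v : ℝ, v = (x₀ - s₁) / (u - s₁) := ⟨_, rfl⟩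
  have hl0 : 0 < l := hl ▸ div_pos hux₀ hus₁
  have hm0 : 0 < m := hm ▸ div_pos (by linarith : (0:ℝ) < x₀ - s₁) hus₁
  have hlm : l + m = 1 := by rw [hl, hm]; field_simp; ring
  have hpt : l * s₁ + m * u = x₀ := by rw [hl, hm]; field_simp; ring
  have hch := econvex_chord hF hFs₁ hu3 (le_of_lt hl0) (le_of_lt hm0) hlm
  rw [hpt] at hch
  have hΦeq : l * r₁ + m * (c * u) = Φ u := by
    rw [hl, hm, hΦ]
    field_simp
  refine le_trans hch ?_
  apply EReal.coe_le_coe_iff.2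
  rw [hΦeq]
  exact le_of_lt hΦu

end ChordLimit

section LemK

lemma lemK {f : ℝ → EReal} (hconv : EConvex f)
    (hneg : ∀ θ : ℝ, θ < 0 → f θ = ⊤) {a₀ : ℝ}
    (hline : ∀ θ : ℝ, ((θ * a₀ : ℝ) : EReal) ≤ f θ)
    {p : ℝ} (hp0 : 0 < p) (hϑ : varthetapp f ≤ (p : EReal))
    (hrc : ContinuousWithinAt (enat f) (Set.Ici p) p)
    {a : ℝ} (haf : enat f a < ⊤) (hap : a ≤ p)
    {θ : ℝ} (hθ : p < θ) :
    (θ : EReal) * (enat f p * ((p⁻¹ : ℝ) : EReal)) ≤ enat f θ := by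
  have hθ0 : 0 < θ := lt_trans hp0 hθ
  have hfbot : ∀ y : ℝ, f y ≠ ⊥ := fun y =>
    ne_of_gt (lt_of_lt_of_le (EReal.bot_lt_coe _) (hline y))
  have hgline : ∀ x : ℝ, ((x * a₀ : ℝ) : EReal) ≤ enat f x := enat_ge_line hline
  have hgbot : ∀ x : ℝ, enat f x ≠ ⊥ := fun x =>
    ne_of_gt (lt_of_lt_of_le (EReal.bot_lt_coe _) (hgline x))
  -- reduce to the slope inequality
  have hgθeq : (θ : EReal) * (enat f θ * ((θ⁻¹ : ℝ) : EReal)) = enat f θ := by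
    rw [mul_comm]
    exact EReal.mul_coe_inv_cancel hθ0.ne'
  suffices hσ : enat f p * ((p⁻¹ : ℝ) : EReal) ≤ enat f θ * ((θ⁻¹ : ℝ) : EReal) by
    calc (θ : EReal) * (enat f p * ((p⁻¹ : ℝ) : EReal))
        ≤ (θ : EReal) * (enat f θ * ((θ⁻¹ : ℝ) : EReal)) :=
          mul_le_mul_of_nonneg_left hσ (by exact_mod_cast le_of_lt hθ0)
      _ = enat f θ := hgθeq
  by_contra hcon
  push_neg at hcon
  obtain ⟨c, hc1, hc2⟩ := EReal.exists_between_coe_real hcon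
  -- no equality points beyond p
  have hEq : ∀ x : ℝ, p < x → ¬ (f x = enat f x) := by
    intro x hx heq
    have h5 : (x : EReal) ≤ varthetapp f := le_sSup ⟨x, heq, rfl⟩
    have h6 : (x : EReal) ≤ (p : EReal) := le_trans h5 hϑ
    exact absurd (EReal.coe_le_coe_iff.1 h6) (not_le.2 hx)
  have hanti := antitoneOn_enat f
  -- the line c is below enat f on (0, p]
  have hβg : ∀ y : ℝ, 0 < y → y ≤ p → ((c * y : ℝ) : EReal) ≤ enat f y := by
    intro y hy0 hyp
    have h5 : (c : EReal) ≤ enat f y * ((y⁻¹ : ℝ) : EReal) :=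
      le_of_lt (lt_of_lt_of_le hc2 (hanti (Set.mem_Ioi.2 hy0) (Set.mem_Ioi.2 hp0) hyp))
    have h6 : (c : EReal) * (y : EReal) ≤ enat f y * ((y⁻¹ : ℝ) : EReal) * (y : EReal) :=
      mul_le_mul_of_nonneg_right h5 (by exact_mod_cast le_of_lt hy0)
    rw [EReal.mul_coe_inv_cancel hy0.ne'] at h6
    rw [show ((c * y : ℝ) : EReal) = (c : EReal) * (y : EReal) from EReal.coe_mul c y]
    exact h6
  have hβf : ∀ y : ℝ, 0 < y → y ≤ p → ((c * y : ℝ) : EReal) ≤ f y :=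
    fun y h1 h2 => le_trans (hβg y h1 h2) (enat_le f y)
  have hcontra : ¬ (((c * θ : ℝ) : EReal) ≤ enat f θ) := by
    intro h5
    have h6 : (c : EReal) ≤ enat f θ * ((θ⁻¹ : ℝ) : EReal) := by
      have h7 := mul_le_mul_of_nonneg_right h5
        (by exact_mod_cast le_of_lt (inv_pos.2 hθ0) : (0:EReal) ≤ ((θ⁻¹:ℝ):EReal))
      rwa [← EReal.coe_mul, show c * θ * θ⁻¹ = c by field_simp] at h7
    exact absurd (lt_of_le_of_lt h6 hc1) (lt_irrefl _)
  set B : Set ℝ := {y : ℝ | p < y ∧ f y < ((c * y : ℝ) : EReal)} with hB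
  by_cases hBne : B.Nonempty
  swap
  · -- B empty
    have hβθ : ∀ y : ℝ, 0 < y → y ≤ θ → ((c * y : ℝ) : EReal) ≤ f y := by
      intro y h1 h2
      rcases le_or_gt y p with h3 | h3
      · exact hβf y h1 h3
      · by_contra h4
        push_neg at h4
        exact hBne ⟨y, h3, h4⟩
    by_cases hanch : ∃ s₁ : ℝ, s₁ < θ ∧ f s₁ < ⊤
    · obtain ⟨s₁, h5, h6⟩ := hanch
      exact hcontra (master hconv hline hneg hθ0 hβθ h5 h6)
    · push_neg at hanch
      have htop : ∀ s : ℝ, s < θ → f s = ⊤ := fun s h5 => top_le_iff.1 (hanch s h5)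
      have hx1 : p < (p + θ)/2 := by linarith
      have hx2 : (p + θ)/2 < θ := by linarith
      exact hEq _ hx1 (by rw [htop _ hx2, enat_top_of_top hline htop hx2])
  · obtain ⟨x₀, hx₀def⟩ : ∃ v : ℝ, v = sInf B := ⟨_, rfl⟩
    have hBbdd : BddBelow B := ⟨p, fun y hy => hy.1.le⟩
    have hx₀p : p ≤ x₀ := hx₀def ▸ le_csInf hBne (fun y hy => hy.1.le)
    have happB : ∀ η : ℝ, 0 < η → ∃ u ∈ B, u < x₀ + η := by
      intro η hη
      by_contra h5
      push_neg at h5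
      have h6 : x₀ + η ≤ sInf B := le_csInf hBne fun y hy => h5 y hy
      rw [← hx₀def] at h6
      linarith
    rcases eq_or_lt_of_le hx₀p with hx₀eq | hx₀gt
    · -- x₀ = p : right-continuity at p
      have hgp : enat f p ≤ ((c * p : ℝ) : EReal) := by
        by_contra h5
        push_neg at h5
        have hT2 : Filter.Tendsto (fun u : ℝ => ((c * u : ℝ) : EReal))
            (𝓝[Set.Ici p] p) (𝓝 ((c * p : ℝ) : EReal)) := by
          have hco : Continuous (fun u : ℝ => ((c * u : ℝ) : EReal)) :=
            continuous_coe_real_ereal.comp (continuous_const.mul continuous_id)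
          exact (hco.tendsto p).mono_left nhdsWithin_le_nhds
        have hev := hT2.eventually_lt hrc h5
        obtain ⟨ε, hε, hsub⟩ := Metric.mem_nhdsWithin_iff.1 hev
        obtain ⟨u, huB, hult⟩ := happB ε hε
        have hup : p < u := huB.1
        have humem : u ∈ Metric.ball p ε ∩ Set.Ici p := by
          constructor
          · rw [Metric.mem_ball, Real.dist_eq, abs_lt]
            constructor
            · linarith
            · rw [← hx₀eq] at hult; linarith
          · exact le_of_lt hup
        have h7 := hsub humem
        have h8 : enat f u ≤ f u := enat_le f u
        exact absurd (lt_of_le_of_lt (le_trans h8 (le_of_lt huB.2)) h7) (lt_irrefl _)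
      have h9 : enat f p * ((p⁻¹:ℝ):EReal) ≤ (c:EReal) := by
        have h10 := mul_le_mul_of_nonneg_right hgp
          (by exact_mod_cast le_of_lt (inv_pos.2 hp0) : (0:EReal) ≤ ((p⁻¹:ℝ):EReal))
        rwa [← EReal.coe_mul, show c * p * p⁻¹ = c by field_simp] at h10
      exact absurd (lt_of_lt_of_le hc2 h9) (lt_irrefl _)
    · -- p < x₀
      by_cases hanch : ∃ s₁ : ℝ, s₁ < x₀ ∧ f s₁ < ⊤
      swap
      · push_neg at hanch
        have htop : ∀ s : ℝ, s < x₀ → f s = ⊤ := fun s h5 => top_le_iff.1 (hanch s h5)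
        have hx1 : p < (p + x₀)/2 := by linarith
        have hx2 : (p + x₀)/2 < x₀ := by linarith
        exact hEq _ hx1 (by rw [htop _ hx2, enat_top_of_top hline htop hx2])
      obtain ⟨s₁, hs₁x, hs₁f⟩ := hanch
      obtain ⟨F₁, hF₁⟩ : ∃ v : ℝ, v = (f s₁).toReal := ⟨_, rfl⟩
      have hfs₁ : f s₁ ≤ (F₁ : EReal) := hF₁ ▸ EReal.le_coe_toReal (ne_of_lt hs₁f)
      have hβ' : ∀ y : ℝ, 0 < y → y < x₀ → ((c * y : ℝ) : EReal) ≤ f y := by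
        intro y h1 h2
        rcases le_or_gt y p with h3 | h3
        · exact hβf y h1 h3
        · by_contra h4
          push_neg at h4
          have h6 : x₀ ≤ y := hx₀def ▸ csInf_le hBbdd ⟨h3, h4⟩
          linarith
      have hx₀0 : 0 < x₀ := lt_trans hp0 hx₀gt
      by_cases hfx₀ : f x₀ < ((c * x₀ : ℝ) : EReal)
      · -- downward jump at x₀ is impossible
        obtain ⟨hrx, hrxlt⟩ := EReal.real_of_lt_coe hfx₀ (hfbot x₀)
        obtain ⟨rx, hrxdef⟩ : ∃ v : ℝ, v = (f x₀).toReal := ⟨_, rfl⟩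
        rw [← hrxdef] at hrx hrxlt
        set Ψ : ℝ → ℝ := fun t => (1-t)*F₁ + t*rx - c*((1-t)*s₁ + t*x₀) with hΨ
        have hΨc : ContinuousAt Ψ 1 := by fun_prop
        have hΨ1 : Ψ 1 = rx - c * x₀ := by rw [hΨ]; norm_num
        have hev1 : ∀ᶠ t in 𝓝[Set.Iio (1:ℝ)] 1, Ψ t < 0 := by
          have h5 : Filter.Tendsto Ψ (𝓝[Set.Iio (1:ℝ)] 1) (𝓝 (Ψ 1)) :=
            hΨc.continuousWithinAt.tendsto
          rw [hΨ1] at h5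
          exact h5.eventually (Iio_mem_nhds (by linarith))
        have hev2 : ∀ᶠ t in 𝓝[Set.Iio (1:ℝ)] 1, 0 < (1-t)*s₁ + t*x₀ := by
          have hca : ContinuousAt (fun t : ℝ => (1-t)*s₁ + t*x₀) 1 := by fun_prop
          have h5 : Filter.Tendsto (fun t : ℝ => (1-t)*s₁ + t*x₀) (𝓝[Set.Iio (1:ℝ)] 1)
              (𝓝 ((1-(1:ℝ))*s₁ + 1*x₀)) := hca.continuousWithinAt.tendsto
          have h6 : (1-(1:ℝ))*s₁ + 1*x₀ = x₀ := by ring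
          rw [h6] at h5
          exact h5.eventually (Ioi_mem_nhds hx₀0)
        have hev3 : ∀ᶠ t in 𝓝[Set.Iio (1:ℝ)] 1, (0:ℝ) < t :=
          eventually_nhdsWithin_of_eventually_nhds (eventually_gt_nhds zero_lt_one)
        have hev4 : ∀ᶠ t in 𝓝[Set.Iio (1:ℝ)] 1, t ∈ Set.Iio (1:ℝ) :=
          eventually_mem_nhdsWithin
        obtain ⟨t, ⟨⟨h5, h6⟩, h7⟩, h8⟩ := (((hev1.and hev2).and hev3).and hev4).exists
        have ht1 : t < 1 := h8
        have hchord := econvex_chord hconv hfs₁ hrx.le (by linarith : (0:ℝ) ≤ 1 - t)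
          (le_of_lt h7) (by ring)
        have hylt : (1-t)*s₁ + t*x₀ < x₀ := by nlinarith
        have h9 := hβ' ((1-t)*s₁ + t*x₀) h6 hylt
        have h11 : ((c * ((1-t)*s₁ + t*x₀) : ℝ) : EReal) ≤ (((1-t)*F₁ + t*rx : ℝ) : EReal) :=
          le_trans h9 hchord
        have h13 : c * ((1-t)*s₁ + t*x₀) ≤ (1-t)*F₁ + t*rx := EReal.coe_le_coe_iff.1 h11
        have h14 : Ψ t = (1-t)*F₁ + t*rx - c*((1-t)*s₁ + t*x₀) := by rw [hΨ]
        linarith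
      · push_neg at hfx₀
        have hx₀notB : x₀ ∉ B := fun h5 => absurd h5.2 (not_lt.2 hfx₀)
        have happ' : ∀ η : ℝ, 0 < η →
            ∃ u : ℝ, x₀ < u ∧ u < x₀ + η ∧ f u ≤ ((c*u:ℝ):EReal) := by
          intro η hη
          obtain ⟨u, huB, hult⟩ := happB η hη
          have hux : x₀ ≤ u := hx₀def ▸ csInf_le hBbdd huB
          have hne : x₀ ≠ u := fun h5 => hx₀notB (h5 ▸ huB)
          exact ⟨u, lt_of_le_of_ne hux hne, hult, le_of_lt huB.2⟩
        have happg : ∀ η : ℝ, 0 < η →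
            ∃ u : ℝ, x₀ < u ∧ u < x₀ + η ∧ enat f u ≤ ((c*u:ℝ):EReal) := by
          intro η hη
          obtain ⟨u, h1, h2, h3⟩ := happ' η hη
          exact ⟨u, h1, h2, le_trans (enat_le f u) h3⟩
        obtain ⟨A, hA⟩ : ∃ v : ℝ, v = (enat f a).toReal := ⟨_, rfl⟩
        have hga : enat f a ≤ (A : EReal) := hA ▸ EReal.le_coe_toReal (ne_of_lt haf)
        have h10 : enat f x₀ ≤ ((c * x₀:ℝ):EReal) :=
          chord_limit (econvex_enat f) (lt_of_le_of_lt hap hx₀gt) hga happg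
        by_cases hgx₀lt : enat f x₀ < ((c * x₀ : ℝ) : EReal)
        · have hβx₀ : ∀ y : ℝ, 0 < y → y ≤ x₀ → ((c*y:ℝ):EReal) ≤ f y := by
            intro y h1 h2
            rcases lt_or_eq_of_le h2 with h3 | h3
            · exact hβ' y h1 h3
            · subst h3
              exact hfx₀
          exact absurd (master hconv hline hneg hx₀0 hβx₀ hs₁x hs₁f) (not_le.2 hgx₀lt)
        · push_neg at hgx₀lt
          have hgx₀ : enat f x₀ = ((c*x₀:ℝ):EReal) := le_antisymm h10 hgx₀lt
          have h12 : f x₀ ≤ ((c*x₀:ℝ):EReal) := chord_limit hconv hs₁x hfs₁ happ'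
          exact hEq x₀ hx₀gt (le_antisymm (h12.trans_eq hgx₀.symm) (enat_le f x₀))

end LemK

/-- Lemma `fg agree lemma` (iv): under the stated conditions,
`max (nat (nat f + χ_C)) κ = max (nat f) κ` except possibly at `ψ = inf C`,
where the left side can only differ by being `+∞`. -/
theorem enat_plus_indicator_max (f κ : ℝ → EReal) (hf : KConvex f)
    (hκ : KConvex κ) (hΓ : ⊥ < speedp (Fd f))
    (C : Set ℝ) (hC : Convex ℝ C)
    (q p : ℝ) (hq : IsGLB C q) (hp : IsLUB C p) (hp0 : 0 < p)
    (hne : (Phi (enat f) ∩ C).Nonempty)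
    (hrc : ContinuousWithinAt (enat f) (Set.Ici p) p)
    (hsub : Phi (enat f) ∩ Phi κ ⊆ Set.Ici q)
    (heither :
      (∀ θ : ℝ, p ≤ θ → (θ : EReal) * (enat f p * ((p⁻¹ : ℝ) : EReal)) ≤ κ θ) ∨
      varthetapp f ≤ (p : EReal)) :
    (∀ θ : ℝ, θ ≠ q →
      max (enat (fun x => enat f x + echi C x) θ) (κ θ) =
        max (enat f θ) (κ θ)) ∧
    (max (enat (fun x => enat f x + echi C x) q) (κ q) ≠
        max (enat f q) (κ q) →
      max (enat (fun x => enat f x + echi C x) q) (κ q) = ⊤) := by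
  obtain ⟨a₀, hline⟩ := exists_linear_minorant hf hΓ
  have hgbot : ∀ x : ℝ, enat f x ≠ ⊥ := fun x =>
    ne_of_gt (lt_of_lt_of_le (EReal.bot_lt_coe _) (enat_ge_line hline x))
  obtain ⟨a, ha⟩ := hne
  have haf : enat f a < ⊤ := ha.1
  have haC : a ∈ C := ha.2
  have hin : ∀ x : ℝ, q < x → x < p → x ∈ C := by
    intro x h1 h2
    obtain ⟨l, hlC, hlx⟩ : ∃ l ∈ C, l < x := by
      by_contra h3
      push_neg at h3
      exact absurd (hq.2 h3) (not_le.2 h1)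
    obtain ⟨r, hrC, hxr⟩ : ∃ r ∈ C, x < r := by
      by_contra h3
      push_neg at h3
      exact absurd (hp.2 h3) (not_le.2 h2)
    exact hC.ordConnected.out hlC hrC ⟨le_of_lt hlx, le_of_lt hxr⟩
  have hmain : ∀ θ : ℝ, θ ≠ q →
      enat (fun x => enat f x + echi C x) θ ≤ max (enat f θ) (κ θ) := by
    intro θ hθq
    by_cases hθC : θ ∈ C
    · rw [enat_add_echi_eq_on f hθC]
      exact le_max_left _ _
    by_cases hθq2 : θ < q
    · have h1 : θ ∉ Phi (enat f) ∩ Phi κ := fun h => absurd (hsub h) (not_le.2 hθq2)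
      by_cases hg : enat f θ < ⊤
      · have hκt : κ θ = ⊤ := by
          by_contra h2
          exact h1 ⟨hg, lt_of_le_of_ne le_top h2⟩
        rw [hκt]
        exact le_trans le_top (le_max_right _ _)
      · have hgt : enat f θ = ⊤ := top_le_iff.1 (not_lt.1 hg)
        rw [hgt]
        exact le_trans le_top (le_max_left _ _)
    · have hθq3 : q < θ := lt_of_le_of_ne (not_lt.1 hθq2) (Ne.symm hθq)
      have hθp : p ≤ θ := by
        by_contra h2
        push_neg at h2
        exact hθC (hin θ hθq3 h2)
      have hS := lemS hC hp hp0 haC haf hgbot hθp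
      rcases heither with hκbig | hϑ
      · exact le_trans hS (le_trans (hκbig θ hθp) (le_max_right _ _))
      · rcases eq_or_lt_of_le hθp with hpe | hpl
        · subst hpe
          refine le_trans hS (le_trans (le_of_eq ?_) (le_max_left _ _))
          rw [mul_comm]
          exact EReal.mul_coe_inv_cancel hp0.ne'
        · have hK := lemK hf.1 hf.2.2 hline hp0 hϑ hrc haf (hp.1 haC) hpl
          exact le_trans hS (le_trans hK (le_max_left _ _))
  constructor
  · intro θ hθq
    apply le_antisymm
    · exact max_le (hmain θ hθq) (le_max_right _ _)
    · exact max_le_max (enat_le_enat_add_echi f C θ) le_rfl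
  · intro hne2
    by_cases hqC : q ∈ C
    · exact absurd (by rw [enat_add_echi_eq_on f hqC]) hne2
    · rw [enat_add_echi_top hgbot hq hqC]
      exact max_eq_left le_top
end
end

section
/- Let f and κ : ℝ → EReal be k-convex with (cl f)(0) > 0, and suppose g = max(nat f, κ) (pointwise maximum) is finite at some point. Then speedp(g*) = inf {max(f(φ)/φ, κ(θ)/θ) : φ, θ ∈ ℝ, 0 < φ ≤ θ} (infimum in EReal). -/
open Set Filter Topology

noncomputable section

namespace SpeedAux

/- ### EReal multiplication helpers -/

lemma mulc_strictMono {c : ℝ} (hc : 0 < c) : StrictMono (fun x : EReal => x * (c : EReal)) := by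
  have h := EReal.strictMono_div_right_of_pos (b := ((c⁻¹ : ℝ) : EReal))
    (by exact_mod_cast inv_pos.2 hc) (by simp)
  have e : ∀ x : EReal, x / ((c⁻¹ : ℝ) : EReal) = x * (c : EReal) := by
    intro x
    rw [division_def, EReal.coe_inv, EReal.inv_inv (by simp) (by simp)]
  simpa only [e] using h

lemma mulc_le_mulc {c : ℝ} (hc : 0 ≤ c) {x y : EReal} (h : x ≤ y) :
    x * (c : EReal) ≤ y * (c : EReal) :=
  mul_le_mul_of_nonneg_right h (by exact_mod_cast hc)

lemma mulc_lt_iff {c : ℝ} (hc : 0 < c) {x y : EReal} :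
    x * (c : EReal) < y * (c : EReal) ↔ x < y := (mulc_strictMono hc).lt_iff_lt

lemma mulc_le_iff {c : ℝ} (hc : 0 < c) {x y : EReal} :
    x * (c : EReal) ≤ y * (c : EReal) ↔ x ≤ y := (mulc_strictMono hc).le_iff_le

lemma mulc_mulc (x : EReal) (c d : ℝ) :
    x * (c : EReal) * (d : EReal) = x * ((c * d : ℝ) : EReal) := by
  rw [mul_assoc, ← EReal.coe_mul]

lemma mulc_cancel {c : ℝ} (hc : c ≠ 0) (x : EReal) :
    x * (c : EReal) * ((c⁻¹ : ℝ) : EReal) = x := by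
  rw [mulc_mulc, mul_inv_cancel₀ hc, EReal.coe_one, mul_one]

lemma mulc_cancel' {c : ℝ} (hc : c ≠ 0) (x : EReal) :
    x * ((c⁻¹ : ℝ) : EReal) * (c : EReal) = x := by
  rw [mulc_mulc, inv_mul_cancel₀ hc, EReal.coe_one, mul_one]

lemma iInf_mulc {ι : Sort*} {c : ℝ} (hc : 0 < c) (h : ι → EReal) :
    (⨅ i, h i) * (c : EReal) = ⨅ i, h i * (c : EReal) := by
  refine le_antisymm (le_iInf fun i => mulc_le_mulc hc.le (iInf_le _ _)) ?_
  have step : (⨅ i, h i * (c : EReal)) * ((c⁻¹ : ℝ) : EReal) ≤ ⨅ i, h i := by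
    refine le_iInf fun i => ?_
    calc (⨅ i, h i * (c : EReal)) * ((c⁻¹ : ℝ) : EReal)
        ≤ (h i * (c : EReal)) * ((c⁻¹ : ℝ) : EReal) :=
          mulc_le_mulc (inv_pos.2 hc).le (iInf_le _ _)
      _ = h i := mulc_cancel hc.ne' _
  have := mulc_le_mulc hc.le step
  rwa [mulc_cancel' hc.ne'] at this

lemma iSup_mulc {ι : Sort*} {c : ℝ} (hc : 0 < c) (h : ι → EReal) :
    (⨆ i, h i) * (c : EReal) = ⨆ i, h i * (c : EReal) := by
  refine le_antisymm ?_ (iSup_le fun i => mulc_le_mulc hc.le (le_iSup _ _))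
  have step : (⨆ i, h i) ≤ (⨆ i, h i * (c : EReal)) * ((c⁻¹ : ℝ) : EReal) := by
    refine iSup_le fun i => ?_
    calc h i = (h i * (c : EReal)) * ((c⁻¹ : ℝ) : EReal) := (mulc_cancel hc.ne' _).symm
      _ ≤ (⨆ i, h i * (c : EReal)) * ((c⁻¹ : ℝ) : EReal) :=
          mulc_le_mulc (inv_pos.2 hc).le (le_iSup (fun i => h i * (c : EReal)) i)
  have := mulc_le_mulc hc.le step
  rwa [mulc_cancel' hc.ne'] at this

lemma max_mulc {c : ℝ} (hc : 0 ≤ c) (x y : EReal) :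
    (max x y) * (c : EReal) = max (x * (c : EReal)) (y * (c : EReal)) :=
  Monotone.map_max (fun _ _ h => mulc_le_mulc hc h)

lemma lt_coe_mul_iff {c a : ℝ} (hc : 0 < c) {x : EReal} :
    x < ((a * c : ℝ) : EReal) ↔ x * ((c⁻¹ : ℝ) : EReal) < (a : EReal) := by
  constructor
  · intro h
    have := (mulc_lt_iff (inv_pos.2 hc)).2 h
    rwa [← EReal.coe_mul, mul_inv_cancel_right₀ hc.ne'] at this
  · intro h
    have := (mulc_lt_iff hc).2 h
    rwa [mulc_cancel' hc.ne'] at this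

lemma coe_mul_lt_iff {c a : ℝ} (hc : 0 < c) {x : EReal} :
    ((a * c : ℝ) : EReal) < x ↔ (a : EReal) < x * ((c⁻¹ : ℝ) : EReal) := by
  constructor
  · intro h
    have := (mulc_lt_iff (inv_pos.2 hc)).2 h
    rwa [← EReal.coe_mul, mul_inv_cancel_right₀ hc.ne'] at this
  · intro h
    have := (mulc_lt_iff hc).2 h
    rwa [mulc_cancel' hc.ne'] at this

lemma le_coe_of_forall_add {z : EReal} {u : ℝ}
    (h : ∀ δ : ℝ, 0 < δ → z ≤ ((u + δ : ℝ) : EReal)) : z ≤ (u : EReal) := by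
  induction z with
  | bot => exact bot_le
  | coe z =>
    have : ∀ δ : ℝ, 0 < δ → z ≤ u + δ := fun δ hδ => by exact_mod_cast h δ hδ
    exact_mod_cast le_of_forall_pos_le_add this
  | top => exact absurd (top_le_iff.1 (h 1 one_pos)) (EReal.coe_ne_top _)

/- ### The natural hull candidate -/

def Ifun (f : ℝ → EReal) (x : ℝ) : EReal :=
  ⨅ φ : (Set.Ioc (0:ℝ) x), f φ.1 * ((φ.1⁻¹ : ℝ) : EReal)

def Nfun (f : ℝ → EReal) (x : ℝ) : EReal :=
  if x < 0 then ⊤ else if x = 0 then f 0 else Ifun f x * (x : EReal)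

variable {f : ℝ → EReal}

lemma Ifun_le {x φ : ℝ} (hφ : φ ∈ Set.Ioc (0:ℝ) x) :
    Ifun f x ≤ f φ * ((φ⁻¹ : ℝ) : EReal) := iInf_le _ (⟨φ, hφ⟩ : Set.Ioc (0:ℝ) x)

lemma Ifun_anti {x y : ℝ} (h : x ≤ y) : Ifun f y ≤ Ifun f x :=
  le_iInf fun φ => iInf_le _ (⟨φ.1, φ.2.1, φ.2.2.trans h⟩ : Set.Ioc (0:ℝ) y)

lemma coe_lt_Ifun {c x : ℝ} (h : (c : EReal) < Ifun f x) {φ : ℝ}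
    (hφ : φ ∈ Set.Ioc (0:ℝ) x) : ((c * φ : ℝ) : EReal) < f φ :=
  (coe_mul_lt_iff hφ.1).2 (lt_of_lt_of_le h (Ifun_le hφ))

lemma Ifun_lt {r x : ℝ} (h : Ifun f x < (r : EReal)) :
    ∃ φ ∈ Set.Ioc (0:ℝ) x, f φ < ((r * φ : ℝ) : EReal) := by
  obtain ⟨⟨φ, hφ⟩, hlt⟩ := iInf_lt_iff.1 h
  exact ⟨φ, hφ, (lt_coe_mul_iff hφ.1).2 hlt⟩

lemma Nfun_pos {x : ℝ} (hx : 0 < x) : Nfun f x = Ifun f x * (x : EReal) := by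
  simp [Nfun, not_lt.2 hx.le, hx.ne']

lemma Nfun_zero : Nfun f 0 = f 0 := by simp [Nfun]

lemma Nfun_neg {x : ℝ} (hx : x < 0) : Nfun f x = ⊤ := by simp [Nfun, hx]

lemma Nfun_le (x : ℝ) (hneg : ∀ y < (0:ℝ), f y = ⊤) : Nfun f x ≤ f x := by
  rcases lt_trichotomy x 0 with h | h | h
  · rw [Nfun_neg h, hneg x h]
  · subst h; rw [Nfun_zero]
  · rw [Nfun_pos h]
    calc Ifun f x * (x : EReal) ≤ (f x * ((x⁻¹ : ℝ) : EReal)) * (x : EReal) :=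
          mulc_le_mulc h.le (Ifun_le ⟨h, le_refl x⟩)
      _ = f x := mulc_cancel' h.ne' _

lemma Nfun_slope {x : ℝ} (hx : 0 < x) : Nfun f x * ((x⁻¹ : ℝ) : EReal) = Ifun f x := by
  rw [Nfun_pos hx, mulc_cancel hx.ne']

/-- chord bound from convexity of the epigraph -/
lemma chord (hf : EConvex f) {ψ φ x w v : ℝ} (h1 : ψ < x) (h2 : x < φ)
    (hw : f ψ ≤ (w : EReal)) (hv : f φ ≤ (v : EReal)) :
    f x ≤ (((φ - x)/(φ - ψ) * w + (x - ψ)/(φ - ψ) * v : ℝ) : EReal) := by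
  have hψφ : (0:ℝ) < φ - ψ := by linarith
  have hA : (0:ℝ) ≤ (φ - x)/(φ - ψ) := div_nonneg (by linarith) hψφ.le
  have hB : (0:ℝ) ≤ (x - ψ)/(φ - ψ) := div_nonneg (by linarith) hψφ.le
  have hAB : (φ - x)/(φ - ψ) + (x - ψ)/(φ - ψ) = 1 := by field_simp; ring
  have := hf (x := (ψ, w)) (y := (φ, v)) hw hv hA hB hAB
  have hx' : (φ - x)/(φ - ψ) * ψ + (x - ψ)/(φ - ψ) * φ = x := by field_simp; ring
  simpa [Prod.smul_mk, smul_eq_mul, hx'] using this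

/-- Key two-point inequality for convexity of `Nfun`. -/
lemma Nfun_key (hf : EConvex f) (hneg : ∀ y < (0:ℝ), f y = ⊤) (h0 : 0 < f 0)
    {a b s t lam mu : ℝ} (hab : a < b) (ha : Nfun f a ≤ (s : EReal))
    (hb : Nfun f b ≤ (t : EReal)) (hlam : 0 < lam) (hmu : 0 < mu) (hsum : lam + mu = 1) :
    Nfun f (lam * a + mu * b) ≤ ((lam * s + mu * t : ℝ) : EReal) := by
  have ha0 : 0 ≤ a := by
    by_contra h; push_neg at h
    rw [Nfun_neg h] at ha; exact absurd (top_le_iff.1 ha) (EReal.coe_ne_top _)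
  set x := lam * a + mu * b with hxdef
  clear_value x
  have hax : a < x := by rw [hxdef]; nlinarith
  have hxb : x < b := by rw [hxdef]; nlinarith
  have hx : 0 < x := lt_of_le_of_lt ha0 hax
  have hb0 : 0 < b := lt_trans hx hxb
  have hIb : Ifun f b ≤ ((t / b : ℝ) : EReal) := by
    have hb' : Ifun f b * (b : EReal) ≤ (t : EReal) := by rwa [Nfun_pos hb0] at hb
    have := mulc_le_mulc (inv_pos.2 hb0).le hb'
    rwa [mulc_cancel hb0.ne', ← EReal.coe_mul, ← div_eq_mul_inv] at this
  rw [Nfun_pos hx]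
  rcases eq_or_lt_of_le ha0 with haz | hapos
  · -- Branch A : a = 0
    have hs0 : 0 < s := by
      have ha' : f 0 ≤ (s : EReal) := by rwa [← haz, Nfun_zero] at ha
      exact_mod_cast lt_of_lt_of_le h0 ha'
    have hxm : x = mu * b := by rw [hxdef, ← haz]; ring
    set m := t / b with hmdef
    clear_value m
    have hbm : b * m = t := by rw [hmdef]; field_simp
    refine le_coe_of_forall_add (fun δ0 hδ0 => ?_)
    obtain ⟨δ, hδdef⟩ : ∃ δ : ℝ, δ = δ0 / (x + 1) := ⟨_, rfl⟩
    have hδ : 0 < δ := by rw [hδdef]; positivity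
    have hδx : δ * x ≤ δ0 := by
      rw [hδdef, div_mul_eq_mul_div, div_le_iff₀ (by linarith : (0:ℝ) < x + 1)]
      nlinarith
    have hIr : Ifun f b < ((m + δ : ℝ) : EReal) :=
      lt_of_le_of_lt hIb (by exact_mod_cast lt_add_of_pos_right m hδ)
    obtain ⟨φ, hφ, hfφ⟩ := Ifun_lt hIr
    have hφ0 : 0 < φ := hφ.1
    by_cases hφx : φ ≤ x
    · have h1 : Ifun f x < ((m + δ : ℝ) : EReal) :=
        lt_of_le_of_lt (Ifun_le ⟨hφ0, hφx⟩) ((lt_coe_mul_iff hφ0).1 hfφ)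
      calc Ifun f x * (x : EReal) ≤ ((m + δ : ℝ) : EReal) * (x : EReal) :=
            mulc_le_mulc hx.le h1.le
        _ = (((m + δ) * x : ℝ) : EReal) := by rw [← EReal.coe_mul]
        _ ≤ ((lam * s + mu * t + δ0 : ℝ) : EReal) := by
            apply EReal.coe_le_coe_iff.2
            have hmx : m * x = mu * t := by
              rw [hxm, show m * (mu * b) = mu * (b * m) from by ring, hbm]
            nlinarith [mul_pos hlam hs0, hmx, hδx]
    · push_neg at hφx
      have ha' : f 0 ≤ (s : EReal) := by rwa [← haz, Nfun_zero] at ha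
      have hch := chord hf (ψ := 0) (φ := φ) (x := x) (w := s) (v := (m + δ) * φ)
        hx hφx ha' hfφ.le
      have hNf : Ifun f x * (x : EReal) ≤ f x := by
        have := Nfun_le (f := f) x hneg; rwa [Nfun_pos hx] at this
      refine le_trans (le_trans hNf hch) (EReal.coe_le_coe_iff.2 ?_)
      have e1 : (x - 0)/(φ - 0) * ((m + δ) * φ) = x * (m + δ) := by
        rw [div_mul_eq_mul_div, div_eq_iff (by simpa using hφ0.ne')]; ring
      have e2 : (φ - x)/(φ - 0) ≤ lam := by
        rw [sub_zero, div_le_iff₀ hφ0]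
        nlinarith [mul_le_mul_of_nonneg_left hφ.2 hmu.le]
      have e3 : x * (m + δ) = mu * t + δ * x := by
        rw [show x * (m + δ) = (x * m) + δ * x from by ring,
          hxm, show mu * b * m = mu * (b * m) from by ring, hbm]
      linarith [mul_le_mul_of_nonneg_right e2 hs0.le, e1, e3, hδx]
  · -- Branch B : 0 < a
    have hIa : Ifun f a ≤ ((s / a : ℝ) : EReal) := by
      have ha' : Ifun f a * (a : EReal) ≤ (s : EReal) := by rwa [Nfun_pos hapos] at ha
      have := mulc_le_mulc (inv_pos.2 hapos).le ha'
      rwa [mulc_cancel hapos.ne', ← EReal.coe_mul, ← div_eq_mul_inv] at this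
    set m := min (s / a) (t / b) with hmdef
    clear_value m
    have ham : a * m ≤ s := by
      have h1 : m ≤ s / a := hmdef ▸ min_le_left _ _
      calc a * m ≤ a * (s / a) := mul_le_mul_of_nonneg_left h1 hapos.le
        _ = s := by field_simp
    have hbm : b * m ≤ t := by
      have h1 : m ≤ t / b := hmdef ▸ min_le_right _ _
      calc b * m ≤ b * (t / b) := mul_le_mul_of_nonneg_left h1 hb0.le
        _ = t := by field_simp
    have hms : m ≤ s / a := hmdef ▸ min_le_left _ _
    have hIm : Ifun f b ≤ ((m : ℝ) : EReal) := by
      have h1 : Ifun f b ≤ ((s / a : ℝ) : EReal) := le_trans (Ifun_anti hab.le) hIa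
      have h2 : ((m : ℝ) : EReal) = min ((s/a : ℝ) : EReal) ((t/b : ℝ) : EReal) := by
        rw [hmdef]; norm_cast
      rw [h2]; exact le_min h1 hIb
    refine le_coe_of_forall_add (fun δ0 hδ0 => ?_)
    obtain ⟨δ, hδdef⟩ : ∃ δ : ℝ, δ = δ0 / (x + a + 1) := ⟨_, rfl⟩
    have hxa1 : (0:ℝ) < x + a + 1 := by linarith
    have hδ : 0 < δ := by rw [hδdef]; positivity
    have hδx : δ * x + δ * a ≤ δ0 := by
      have : δ * (x + a + 1) = δ0 := by rw [hδdef]; field_simp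
      nlinarith
    have hIr : Ifun f b < ((m + δ : ℝ) : EReal) :=
      lt_of_le_of_lt hIm (by exact_mod_cast lt_add_of_pos_right m hδ)
    obtain ⟨φ, hφ, hfφ⟩ := Ifun_lt hIr
    have hφ0 : 0 < φ := hφ.1
    by_cases hφx : φ ≤ x
    · have h1 : Ifun f x < ((m + δ : ℝ) : EReal) :=
        lt_of_le_of_lt (Ifun_le ⟨hφ0, hφx⟩) ((lt_coe_mul_iff hφ0).1 hfφ)
      calc Ifun f x * (x : EReal) ≤ ((m + δ : ℝ) : EReal) * (x : EReal) :=
            mulc_le_mulc hx.le h1.le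
        _ = (((m + δ) * x : ℝ) : EReal) := by rw [← EReal.coe_mul]
        _ ≤ ((lam * s + mu * t + δ0 : ℝ) : EReal) := by
            apply EReal.coe_le_coe_iff.2
            have hxm2 : x * m = lam * (a * m) + mu * (b * m) := by rw [hxdef]; ring
            linarith [mul_le_mul_of_nonneg_left ham hlam.le,
              mul_le_mul_of_nonneg_left hbm hmu.le, hxm2, hδx,
              mul_nonneg hδ.le hapos.le]
    · push_neg at hφx
      have hIa' : Ifun f a < ((s / a + δ : ℝ) : EReal) :=
        lt_of_le_of_lt hIa (by exact_mod_cast lt_add_of_pos_right (s/a) hδ)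
      obtain ⟨ψ, hψ, hfψ⟩ := Ifun_lt hIa'
      have hψ0 : 0 < ψ := hψ.1
      have hψa : ψ ≤ a := hψ.2
      have hψx : ψ < x := lt_of_le_of_lt hψa hax
      have hch := chord hf (ψ := ψ) (φ := φ) (x := x) (w := (s/a + δ) * ψ)
        (v := (m + δ) * φ) hψx hφx hfψ.le hfφ.le
      have hNf : Ifun f x * (x : EReal) ≤ f x := by
        have := Nfun_le (f := f) x hneg; rwa [Nfun_pos hx] at this
      refine le_trans (le_trans hNf hch) (EReal.coe_le_coe_iff.2 ?_)
      have hφψ : 0 < φ - ψ := by linarith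
      set A := (φ - x)/(φ - ψ) with hAdef
      set B := (x - ψ)/(φ - ψ) with hBdef
      have hA0 : 0 ≤ A := by rw [hAdef]; exact div_nonneg (by linarith) hφψ.le
      have hABx : A * ψ + B * φ = x := by rw [hAdef, hBdef]; field_simp; ring
      clear_value A B
      have hαa : A * ψ ≤ lam * a := by
        rw [hAdef, div_mul_eq_mul_div, div_le_iff₀ hφψ]
        have hid : lam * a * (φ - ψ) - (φ - x) * ψ
            = lam * φ * (a - ψ) + mu * ψ * (b - φ) := by
          rw [hxdef]; linear_combination (φ * ψ) * hsum
        linarith [mul_nonneg (mul_nonneg hlam.le hφ0.le) (sub_nonneg.2 hψa),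
          mul_nonneg (mul_nonneg hmu.le hψ0.le) (sub_nonneg.2 hφ.2), hid]
      have hBφ : B * φ = x - A * ψ := by linarith [hABx]
      have hkey : (A * ψ) * (s/a) ≤ lam * s - lam * a * m + (A * ψ) * m := by
        have h1 : 0 ≤ (lam * a - A * ψ) * (s/a - m) :=
          mul_nonneg (by linarith) (by linarith)
        have h2 : lam * a * (s/a) = lam * s := by field_simp
        nlinarith [h1, h2]
      have expand : A * ((s/a + δ) * ψ) + B * ((m + δ) * φ)
          = (A * ψ) * (s/a) + (x - A * ψ) * m + δ * x := by
        calc A * ((s/a + δ) * ψ) + B * ((m + δ) * φ)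
            = (A * ψ) * (s/a) + (B * φ) * m + δ * (A * ψ + B * φ) := by ring
          _ = (A * ψ) * (s/a) + (x - A * ψ) * m + δ * x := by rw [hBφ]; ring
      rw [expand]
      have hxlam : (x - lam * a) * m = mu * (b * m) := by
        rw [show x - lam * a = mu * b from by rw [hxdef]; ring]; ring
      linarith [hkey, hxlam, mul_le_mul_of_nonneg_left hbm hmu.le, hδx,
        mul_nonneg hδ.le hapos.le]

lemma Nfun_convex (hf : EConvex f) (hneg : ∀ y < (0:ℝ), f y = ⊤) (h0 : 0 < f 0) :
    EConvex (Nfun f) := by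
  rintro ⟨p1, p2⟩ hp ⟨q1, q2⟩ hq lam mu hlam hmu hsum
  simp only [Set.mem_setOf_eq] at hp hq
  simp only [Prod.smul_mk, Prod.mk_add_mk, smul_eq_mul, Set.mem_setOf_eq]
  rcases eq_or_lt_of_le hlam with h0l | hlam'
  · have hmu1 : mu = 1 := by linarith
    rw [← h0l, hmu1]
    simp only [zero_mul, one_mul, zero_add]
    exact hq
  rcases eq_or_lt_of_le hmu with h0m | hmu'
  · have hlam1 : lam = 1 := by linarith
    rw [← h0m, hlam1]
    simp only [zero_mul, one_mul, add_zero]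
    exact hp
  rcases lt_trichotomy p1 q1 with h | h | h
  · exact Nfun_key hf hneg h0 h hp hq hlam' hmu' hsum
  · subst h
    have hx : lam * p1 + mu * p1 = p1 := by rw [← add_mul, hsum, one_mul]
    rw [hx]
    rcases le_total p2 q2 with hpq | hpq
    · refine le_trans hp (EReal.coe_le_coe_iff.2 ?_)
      have h2 : lam * p2 + mu * p2 = p2 := by rw [← add_mul, hsum, one_mul]
      linarith [mul_le_mul_of_nonneg_left hpq hmu'.le]
    · refine le_trans hq (EReal.coe_le_coe_iff.2 ?_)
      have h2 : lam * q2 + mu * q2 = q2 := by rw [← add_mul, hsum, one_mul]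
      linarith [mul_le_mul_of_nonneg_left hpq hlam'.le]
  · have := Nfun_key hf hneg h0 h hq hp hmu' hlam' (by linarith)
    rw [show lam * p1 + mu * q1 = mu * q1 + lam * p1 from by ring,
      show lam * p2 + mu * q2 = mu * q2 + lam * p2 from by ring]
    exact this

lemma Nfun_anti_slope :
    AntitoneOn (fun θ : ℝ => Nfun f θ * ((θ⁻¹ : ℝ) : EReal)) (Set.Ioi 0) := by
  intro u hu v hv huv
  simp only
  rw [Nfun_slope (Set.mem_Ioi.1 hu), Nfun_slope (Set.mem_Ioi.1 hv)]
  exact Ifun_anti huv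

lemma le_enat_of_valid {g : ℝ → EReal} (hg : EConvex g) (hle : ∀ y, g y ≤ f y)
    (hanti : AntitoneOn (fun θ : ℝ => g θ * ((θ⁻¹ : ℝ) : EReal)) (Set.Ioi 0)) (x : ℝ) :
    g x ≤ enat f x :=
  le_iSup (fun h : {h : ℝ → EReal // EConvex h ∧ (∀ y, h y ≤ f y) ∧
      AntitoneOn (fun θ : ℝ => h θ * ((θ⁻¹ : ℝ) : EReal)) (Set.Ioi 0)} => h.1 x)
    ⟨g, hg, hle, hanti⟩

/- ### the spike minorant -/

def spike : ℝ → EReal := fun y => if y < 0 then ⊤ else if y = 0 then 0 else ⊥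

lemma spike_neg {y : ℝ} (h : y < 0) : spike y = ⊤ := if_pos h

lemma spike_zero : spike 0 = 0 := by simp [spike]

lemma spike_pos {y : ℝ} (h : 0 < y) : spike y = ⊥ := by
  simp [spike, not_lt.2 h.le, h.ne']

lemma spike_mem {y t : ℝ} : spike y ≤ (t : EReal) ↔ 0 < y ∨ (y = 0 ∧ 0 ≤ t) := by
  rcases lt_trichotomy y 0 with h | h | h
  · rw [spike_neg h]
    constructor
    · intro habs; exact absurd (top_le_iff.1 habs) (EReal.coe_ne_top _)
    · rintro (h' | ⟨h', _⟩) <;> linarith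
  · subst h; rw [spike_zero]
    constructor
    · intro h'; exact Or.inr ⟨rfl, by exact_mod_cast h'⟩
    · rintro (h' | ⟨_, h'⟩)
      · exact absurd h' (lt_irrefl 0)
      · exact_mod_cast h'
  · rw [spike_pos h]; simp [h]

lemma spike_convex : EConvex spike := by
  rintro ⟨y1, t1⟩ h1 ⟨y2, t2⟩ h2 lam mu hlam hmu hsum
  simp only [Set.mem_setOf_eq] at h1 h2
  simp only [Prod.smul_mk, Prod.mk_add_mk, smul_eq_mul, Set.mem_setOf_eq]
  rw [spike_mem] at h1 h2 ⊢
  rcases eq_or_lt_of_le hlam with hl0 | hl0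
  · have hmu1 : mu = 1 := by linarith
    rw [← hl0, hmu1]; simpa using h2
  rcases eq_or_lt_of_le hmu with hm0 | hm0
  · have hlam1 : lam = 1 := by linarith
    rw [← hm0, hlam1]; simpa using h1
  rcases h1 with h1 | ⟨h1, h1'⟩ <;> rcases h2 with h2 | ⟨h2, h2'⟩
  · exact Or.inl (by nlinarith)
  · exact Or.inl (by nlinarith)
  · exact Or.inl (by nlinarith)
  · refine Or.inr ⟨by rw [h1, h2]; ring, ?_⟩
    have := mul_nonneg hl0.le h1'
    have := mul_nonneg hm0.le h2'
    linarith

lemma spike_anti_slope :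
    AntitoneOn (fun θ : ℝ => spike θ * ((θ⁻¹ : ℝ) : EReal)) (Set.Ioi 0) := by
  intro u hu v hv _
  simp only
  rw [spike_pos (Set.mem_Ioi.1 hv),
    EReal.bot_mul_of_pos (by exact_mod_cast inv_pos.2 (Set.mem_Ioi.1 hv))]
  exact bot_le

lemma enat_zero_nonneg (hneg : ∀ y < (0:ℝ), f y = ⊤) (h0 : 0 ≤ f 0) :
    (0 : EReal) ≤ enat f 0 := by
  have hle : ∀ y, spike y ≤ f y := by
    intro y
    rcases lt_trichotomy y 0 with h | h | h
    · rw [spike_neg h, hneg y h]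
    · subst h; rw [spike_zero]; exact h0
    · rw [spike_pos h]; exact bot_le
  have := le_enat_of_valid spike_convex hle spike_anti_slope 0
  rwa [spike_zero] at this

/- ### `enat` slope identity -/

lemma enat_slope_eq (hf : EConvex f) (hneg : ∀ y < (0:ℝ), f y = ⊤) (h0 : 0 < f 0)
    {θ : ℝ} (hθ : 0 < θ) : enat f θ * ((θ⁻¹ : ℝ) : EReal) = Ifun f θ := by
  refine le_antisymm ?_ ?_
  · show (⨆ g : {g : ℝ → EReal // EConvex g ∧ (∀ y, g y ≤ f y) ∧
        AntitoneOn (fun θ : ℝ => g θ * ((θ⁻¹ : ℝ) : EReal)) (Set.Ioi 0)}, g.1 θ)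
        * ((θ⁻¹ : ℝ) : EReal) ≤ Ifun f θ
    rw [iSup_mulc (inv_pos.2 hθ)]
    refine iSup_le fun g => le_iInf fun φ => ?_
    have h1 := g.2.2.2 (Set.mem_Ioi.2 φ.2.1) (Set.mem_Ioi.2 hθ) φ.2.2
    exact le_trans h1 (mulc_le_mulc (inv_nonneg.2 φ.2.1.le) (g.2.2.1 φ.1))
  · have h1 : Nfun f θ ≤ enat f θ :=
      le_enat_of_valid (Nfun_convex hf hneg h0) (fun y => Nfun_le y hneg)
        Nfun_anti_slope θ
    calc Ifun f θ = Nfun f θ * ((θ⁻¹ : ℝ) : EReal) := (Nfun_slope hθ).symm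
      _ ≤ enat f θ * ((θ⁻¹ : ℝ) : EReal) := mulc_le_mulc (inv_pos.2 hθ).le h1

/- ### speed via slopes -/

lemma speedp_eq (g : ℝ → EReal) (hneg : ∀ θ < (0:ℝ), g θ = ⊤) (h0 : 0 ≤ g 0) :
    speedp (Fd g) = ⨅ θ : Set.Ioi (0:ℝ), g θ.1 * ((θ.1⁻¹ : ℝ) : EReal) := by
  set L := ⨅ θ : Set.Ioi (0:ℝ), g θ.1 * ((θ.1⁻¹ : ℝ) : EReal) with hL
  have hiff : ∀ a : ℝ, 0 < Fd g a ↔ L < (a : EReal) := by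
    intro a
    rw [Fd, lt_iSup_iff]
    constructor
    · rintro ⟨θ, hθ⟩
      have hθ' : g θ < ((θ * a : ℝ) : EReal) := by
        have h2 := EReal.lt_sub_iff_add_lt (a := ((θ*a:ℝ):EReal)) (b := g θ)
          (c := (0:EReal)) (Or.inr (by simp)) (Or.inr (by simp))
        rw [zero_add] at h2
        exact h2.1 hθ
      rcases lt_trichotomy θ 0 with h | h | h
      · rw [hneg θ h] at hθ'; exact absurd hθ' (not_top_lt)
      · subst h
        rw [zero_mul] at hθ'
        exact absurd (lt_of_le_of_lt h0 (by exact_mod_cast hθ')) (lt_irrefl _)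
      · have h2 : g θ * ((θ⁻¹ : ℝ) : EReal) < (a : EReal) :=
          (lt_coe_mul_iff h).1 (by rwa [mul_comm] at hθ')
        exact lt_of_le_of_lt (iInf_le _ (⟨θ, h⟩ : Set.Ioi (0:ℝ))) h2
    · intro hL'
      rw [hL] at hL'
      obtain ⟨⟨θ, hθ⟩, h2⟩ := iInf_lt_iff.1 hL'
      refine ⟨θ, ?_⟩
      have h3 : g θ < ((a * θ : ℝ) : EReal) := (lt_coe_mul_iff hθ).2 h2
      rw [mul_comm] at h3
      have h4 := EReal.lt_sub_iff_add_lt (a := ((θ*a:ℝ):EReal)) (b := g θ)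
        (c := (0:EReal)) (Or.inr (by simp)) (Or.inr (by simp))
      rw [zero_add] at h4
      exact h4.2 h3
  rw [speedp]
  have hset : {a : ℝ | 0 < Fd g a} = {a : ℝ | L < (a : EReal)} :=
    Set.ext fun a => hiff a
  rw [hset]
  refine le_antisymm ?_ (le_sInf ?_)
  · by_contra hcon
    push_neg at hcon
    obtain ⟨y, hy1, hy2⟩ := EReal.exists_between_coe_real hcon
    have hymem : y ∈ {a : ℝ | L < (a : EReal)} := hy1
    exact absurd (sInf_le (Set.mem_image_of_mem (fun a : ℝ => (a : EReal)) hymem))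
      (not_le.2 hy2)
  · rintro z ⟨a, ha, rfl⟩
    exact le_of_lt ha

end SpeedAux

/-- Two-class speed formula: for k-convex `f, κ` with `(cl f)(0) > 0` and
`g = max (nat f) κ` finite somewhere,
`speedp g* = inf {max (f(φ)/φ, κ(θ)/θ) : 0 < φ ≤ θ}`. -/


theorem speedp_two_class (f κ : ℝ → EReal) (hf : KConvex f) (hκ : KConvex κ)
    (hcl : 0 < ecl f 0)
    (g : ℝ → EReal) (hg : g = fun θ => max (enat f θ) (κ θ))
    (hfin : ∃ θ : ℝ, g θ < ⊤) :
    speedp (Fd g) =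
      sInf {v : EReal | ∃ φ θ : ℝ, 0 < φ ∧ φ ≤ θ ∧
        v = max (f φ * ((φ⁻¹ : ℝ) : EReal)) (κ θ * ((θ⁻¹ : ℝ) : EReal))} := by
  classical
  obtain ⟨hfc, -, hfneg⟩ := hf
  obtain ⟨hκc, -, hκneg⟩ := hκ
  have hf0 : 0 < f 0 := lt_of_lt_of_le hcl (iSup_le fun h => h.2.2 0)
  have hgneg : ∀ θ < (0:ℝ), g θ = ⊤ := by
    intro θ h; rw [hg]; simp only; rw [hκneg θ h]; exact max_eq_right le_top
  have hg0 : (0:EReal) ≤ g 0 := by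
    rw [hg]; exact le_trans (SpeedAux.enat_zero_nonneg hfneg hf0.le) (le_max_left _ _)
  rw [SpeedAux.speedp_eq g hgneg hg0]
  have hL : (⨅ θ : Set.Ioi (0:ℝ), g θ.1 * ((θ.1⁻¹ : ℝ) : EReal))
      = ⨅ θ : Set.Ioi (0:ℝ),
          max (SpeedAux.Ifun f θ.1) (κ θ.1 * ((θ.1⁻¹ : ℝ) : EReal)) := by
    refine iInf_congr fun θ => ?_
    have hθ : (0:ℝ) < θ.1 := θ.2
    rw [hg]
    simp only
    rw [SpeedAux.max_mulc (inv_nonneg.2 hθ.le),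
      SpeedAux.enat_slope_eq hfc hfneg hf0 hθ]
  rw [hL]
  have hinner : ∀ θ : Set.Ioi (0:ℝ),
      max (SpeedAux.Ifun f θ.1) (κ θ.1 * ((θ.1⁻¹ : ℝ) : EReal))
      = ⨅ φ : Set.Ioc (0:ℝ) θ.1,
          max (f φ.1 * ((φ.1⁻¹ : ℝ) : EReal)) (κ θ.1 * ((θ.1⁻¹ : ℝ) : EReal)) := by
    intro θ
    rw [max_comm]
    show (κ θ.1 * ((θ.1⁻¹ : ℝ) : EReal)) ⊔ (⨅ φ : Set.Ioc (0:ℝ) θ.1,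
      f φ.1 * ((φ.1⁻¹ : ℝ) : EReal)) = _
    rw [sup_iInf_eq]
    exact iInf_congr fun φ => max_comm _ _
  have houter : sInf {v : EReal | ∃ φ θ : ℝ, 0 < φ ∧ φ ≤ θ ∧
        v = max (f φ * ((φ⁻¹ : ℝ) : EReal)) (κ θ * ((θ⁻¹ : ℝ) : EReal))}
      = ⨅ θ : Set.Ioi (0:ℝ), ⨅ φ : Set.Ioc (0:ℝ) θ.1,
          max (f φ.1 * ((φ.1⁻¹ : ℝ) : EReal)) (κ θ.1 * ((θ.1⁻¹ : ℝ) : EReal)) := by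
    refine le_antisymm
      (le_iInf fun θ => le_iInf fun φ => sInf_le ⟨φ.1, θ.1, φ.2.1, φ.2.2, rfl⟩)
      (le_sInf ?_)
    rintro v ⟨φ, θ, h1, h2, rfl⟩
    exact le_trans (iInf_le _ (⟨θ, lt_of_lt_of_le h1 h2⟩ : Set.Ioi (0:ℝ)))
      (iInf_le _ (⟨φ, h1, h2⟩ : Set.Ioc (0:ℝ) θ))
  rw [houter]
  exact iInf_congr hinner
end
end
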